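/- arXiv:2002.06947 — 8 statements merged into one kernel-verified Lean document; each statement's English description precedes it below -/
import Mathlib

section
/- Let $\mathcal{F}$ be a finite family of at least $d+1$ compact convex sets in $\mathbb{R}^d$ whose common intersection $I$ is nonempty, and let $x$ be the lexicographic minimum point of $I$. Then there exists a subfamily $\mathcal{H} \subseteq \mathcal{F}$ of exactly $d$ sets such that $x$ is the lexicographic minimum point of $\bigcap \mathcal{H}$. -/
open Module Convex

/-- Positive scalar multiplication preserves strict lexicographic order. -/
lemma lex_smul_lt {d : ℕ} {a : ℝ} (ha : 0 < a) {u v : Fin d → ℝ}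
    (h : toLex u < toLex v) : toLex (a • u) < toLex (a • v) := by
  obtain ⟨i, h1, h2⟩ := h
  refine ⟨i, fun j hj => ?_, ?_⟩
  · exact congrArg (a * ·) (h1 j hj)
  · exact mul_lt_mul_of_pos_left h2 ha

lemma lex_smul_le {d : ℕ} {a : ℝ} (ha : 0 ≤ a) {u v : Fin d → ℝ}
    (h : toLex u ≤ toLex v) : toLex (a • u) ≤ toLex (a • v) := by
  rcases ha.eq_or_lt with rfl | ha
  · simp
  · rcases h.eq_or_lt with h | h
    · exact le_of_eq (by rw [toLex_inj.mp h])
    · exact (lex_smul_lt ha h).le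

lemma lex_lt_of_not_le' {d : ℕ} {u v : Fin d → ℝ}
    (h : ¬ toLex u ≤ toLex v) : toLex v < toLex u := by
  exact lt_of_not_ge h

lemma lex_toLex_add {d : ℕ} (u v : Fin d → ℝ) :
    toLex (u + v) = toLex u + toLex v := rfl

/-- The strict lex lower set is convex. -/
lemma lex_lower_convex {d : ℕ} (x : Fin d → ℝ) :
    Convex ℝ {y : Fin d → ℝ | toLex y < toLex x} := by
  intro y hy z hz a b ha hb hab
  rcases ha.eq_or_lt with rfl | ha
  · simpa [(by linarith : b = 1)] using hz
  · have h1 : toLex (a • y) < toLex (a • x) := lex_smul_lt ha hy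
    have h2 : toLex (b • z) ≤ toLex (b • x) := lex_smul_le hb hz.le
    have hsum : toLex (a • y + b • z) < toLex (a • x + b • x) := by
      rw [lex_toLex_add, lex_toLex_add]
      exact add_lt_add_of_lt_of_le h1 h2
    have hxx : a • x + b • x = x := by rw [← _root_.add_smul, hab, one_smul]
    rw [hxx] at hsum
    exact hsum

theorem stmt_0 {d : ℕ} (hd : 1 ≤ d) (F : Finset (Set (Fin d → ℝ)))
    (hcard : d + 1 ≤ F.card)
    (hconv : ∀ S ∈ F, Convex ℝ S) (hcomp : ∀ S ∈ F, IsCompact S)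
    (x : Fin d → ℝ) (hx : x ∈ ⋂ S ∈ F, S)
    (hmin : ∀ y ∈ ⋂ S ∈ F, S, toLex x ≤ toLex y) :
    ∃ H ⊆ F, H.card = d ∧ x ∈ ⋂ S ∈ H, S ∧
      ∀ y ∈ ⋂ S ∈ H, S, toLex x ≤ toLex y := by
  classical
  by_contra hcon
  push_neg at hcon
  -- For every subfamily H of size d there is a point of ⋂ H strictly below x.
  have key : ∀ H : Finset (Set (Fin d → ℝ)), H ⊆ F → H.card = d →
      ∃ y ∈ ⋂ S ∈ H, S, toLex y < toLex x := by
    intro H hHF hHd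
    have hxH : x ∈ ⋂ S ∈ H, S := by
      simp only [Set.mem_iInter] at hx ⊢
      exact fun S hS => hx S (hHF hS)
    obtain ⟨y, hy, hylt⟩ := hcon H hHF hHd hxH
    exact ⟨y, hy, hylt⟩
  set C : Set (Fin d → ℝ) := {y | toLex y < toLex x} with hC
  have hCF : C ∉ F := by
    intro h
    have : x ∈ C := by
      simp only [Set.mem_iInter] at hx
      exact hx C h
    exact absurd this (by simp only [hC, Set.mem_setOf_eq]; exact lt_irrefl _)
  set G : Finset (Set (Fin d → ℝ)) := insert C F with hG
  have hdim : finrank ℝ (Fin d → ℝ) = d := by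
    simp [finrank_fintype_fun_eq_card]
  -- Helly for the family G = F ∪ {C}
  have hHelly : (⋂₀ (G : Set (Set (Fin d → ℝ)))).Nonempty := by
    apply helly_theorem_set' (𝕜 := ℝ)
    · intro X hX
      rcases Finset.mem_insert.mp hX with rfl | hX
      · exact lex_lower_convex x
      · exact hconv X hX
    · intro G' hG' hcardG'
      rw [hdim] at hcardG'
      by_cases hCG' : C ∈ G'
      · -- G' \ {C} ⊆ F, enlarge to a set of card d
        have hsub : G'.erase C ⊆ F := fun S hS => by
          rcases Finset.mem_insert.mp (hG' (Finset.mem_of_mem_erase hS)) with rfl | h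
          · exact absurd rfl (Finset.ne_of_mem_erase hS)
          · exact h
        have hcard2 : (G'.erase C).card ≤ d := by
          have := Finset.card_erase_of_mem hCG'
          omega
        obtain ⟨H, hGH, hHF, hHd⟩ := Finset.exists_subsuperset_card_eq hsub hcard2
          (by omega : d ≤ F.card)
        obtain ⟨y, hy, hylt⟩ := key H hHF hHd
        refine ⟨y, ?_⟩
        rw [Set.mem_sInter]
        intro S hS
        rcases Finset.mem_insert.mp (hG' hS) with rfl | h
        · exact hylt
        · have : S ∈ H := by
            rcases eq_or_ne S C with rfl | hne
            · exact absurd h hCF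
            · exact hGH (Finset.mem_erase.mpr ⟨hne, hS⟩)
          simp only [Set.mem_iInter] at hy
          exact hy S this
      · -- G' ⊆ F so x works
        refine ⟨x, ?_⟩
        rw [Set.mem_sInter]
        intro S hS
        have : S ∈ F := by
          rcases Finset.mem_insert.mp (hG' hS) with rfl | h
          · exact absurd hS hCG'
          · exact h
        simp only [Set.mem_iInter] at hx
        exact hx S this
  obtain ⟨y, hy⟩ := hHelly
  rw [Set.mem_sInter] at hy
  have hyF : y ∈ ⋂ S ∈ F, S := by
    simp only [Set.mem_iInter]
    exact fun S hS => hy S (by simp [hG, hS])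
  have hyC : toLex y < toLex x := hy C (by simp [hG])
  exact absurd (hmin y hyF) hyC.not_ge
end

section
/- Let $\mathfrak{S} = (\mathcal{B}, \mathcal{C}, \mathcal{D}, h, \preceq)$ be an Ordered-Helly system. Let $\mathcal{F} \subseteq \mathcal{D}$ be a family of $n \geq h$ compact sets whose common intersection $I$ is nonempty, and let $x$ be the $\preceq$-minimum of $I$. Then there exists a subfamily $\mathcal{G} \subseteq \mathcal{F}$ of size $h-1$ such that $x$ is the $\preceq$-minimum of $\bigcap \mathcal{G}$. -/
structure OrderedHellySystem (B : Type*) [LinearOrder B] where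
  C : Set (Set B)
  D : Set (Set B)
  h : ℕ
  two_le_h : 2 ≤ h
  D_subset_C : D ⊆ C
  inter_mem : ∀ S₁ ∈ D, ∀ S₂ ∈ D, S₁ ∩ S₂ ∈ D
  attainable_min : ∀ S ∈ D, S.Nonempty → ∃ x ∈ S, ∀ y ∈ S, x ≤ y
  convex_order : ∀ t : B, {x : B | x < t} ∈ C
  helly : ∀ F : Finset (Set B), ↑F ⊆ C → h ≤ F.card →
    (∀ G ⊆ F, G.card = h → (⋂ S ∈ G, S).Nonempty) → (⋂ S ∈ F, S).Nonempty

theorem stmt_7 {B : Type*} [LinearOrder B] (𝔖 : OrderedHellySystem B)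
    (F : Finset (Set B)) (hFD : ↑F ⊆ 𝔖.D) (hcard : 𝔖.h ≤ F.card)
    (x : B) (hx : x ∈ ⋂ S ∈ F, S) (hmin : ∀ y ∈ ⋂ S ∈ F, S, x ≤ y) :
    ∃ G ⊆ F, G.card = 𝔖.h - 1 ∧ x ∈ ⋂ S ∈ G, S ∧
      ∀ y ∈ ⋂ S ∈ G, S, x ≤ y := by
  classical
  set ds : Set B := {y : B | y < x} with hds
  have hdsF : ds ∉ F := by
    intro hmem
    have : x ∈ ds := Set.mem_iInter₂.mp hx ds hmem
    exact lt_irrefl x this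
  -- the full family F ∪ {ds} has empty intersection
  have hempty : ¬ (⋂ S ∈ insert ds F, S).Nonempty := by
    rintro ⟨y, hy⟩
    simp only [Finset.mem_insert, Set.mem_iInter] at hy
    have hyds : y < x := hy ds (Or.inl rfl)
    have hyF : y ∈ ⋂ S ∈ F, S := by
      simp only [Set.mem_iInter]; exact fun S hS => hy S (Or.inr hS)
    exact absurd (hmin y hyF) (not_le.mpr hyds)
  -- apply contrapositive of Helly
  have hsubC : ↑(insert ds F) ⊆ 𝔖.C := by
    intro S hS
    simp only [Finset.coe_insert, Set.mem_insert_iff] at hS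
    rcases hS with rfl | hS
    · exact 𝔖.convex_order x
    · exact 𝔖.D_subset_C (hFD hS)
  have hcard' : 𝔖.h ≤ (insert ds F).card := le_trans hcard (Finset.card_le_card (Finset.subset_insert _ _))
  obtain ⟨G', hG'sub, hG'card, hG'empty⟩ :
      ∃ G' ⊆ insert ds F, G'.card = 𝔖.h ∧ ¬ (⋂ S ∈ G', S).Nonempty := by
    by_contra hcon
    push_neg at hcon
    exact hempty (𝔖.helly _ hsubC hcard' (fun G hG hGc => hcon G hG hGc))
  have hdsG' : ds ∈ G' := by
    by_contra hds'
    apply hG'empty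
    refine ⟨x, ?_⟩
    simp only [Set.mem_iInter]
    intro S hS
    have hSF : S ∈ F := by
      rcases Finset.mem_insert.mp (hG'sub hS) with rfl | h
      · exact absurd hS hds'
      · exact h
    exact Set.mem_iInter₂.mp hx S hSF
  refine ⟨G'.erase ds, ?_, ?_, ?_, ?_⟩
  · intro S hS
    have := Finset.mem_of_mem_erase hS
    rcases Finset.mem_insert.mp (hG'sub this) with rfl | h
    · exact absurd rfl (Finset.ne_of_mem_erase hS)
    · exact h
  · rw [Finset.card_erase_of_mem hdsG', hG'card]
  · simp only [Set.mem_iInter]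
    intro S hS
    have hSF : S ∈ F := by
      have := Finset.mem_of_mem_erase hS
      rcases Finset.mem_insert.mp (hG'sub this) with rfl | h
      · exact absurd rfl (Finset.ne_of_mem_erase hS)
      · exact h
    exact Set.mem_iInter₂.mp hx S hSF
  · intro y hy
    by_contra hlt
    push_neg at hlt
    apply hG'empty
    refine ⟨y, ?_⟩
    simp only [Set.mem_iInter]
    intro S hS
    by_cases hSd : S = ds
    · exact hSd ▸ hlt
    · exact Set.mem_iInter₂.mp hy S (Finset.mem_erase.mpr ⟨hSd, hS⟩)
end

section
/- Let $\mathfrak{S} = (\mathcal{B}, \mathcal{C}, \mathcal{D}, h, \preceq)$ be an Ordered-Helly system and let $p \geq q \geq h$ be integers with $(h-2)p < (h-1)(q-1)$. If $\mathcal{F}$ is a finite family of nonempty members of $\mathcal{D}$ with the $(p,q)$-property, then there exist $p-q+1$ elements of $\mathcal{B}$ stabbing $\mathcal{F}$. -/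
open Finset

private lemma ohs_biInter_mono {B : Type*} {H₂ H : Finset (Set B)} (h : H₂ ⊆ H) :
    (⋂ S ∈ H, S) ⊆ ⋂ S ∈ H₂, S := by
  intro x hx
  simp only [Set.mem_iInter] at hx ⊢
  exact fun S hS => hx S (h hS)

private lemma ohs_interD {B : Type*} [LinearOrder B] (𝔖 : OrderedHellySystem B) :
    ∀ (Q : Finset (Set B)), Q.Nonempty → ↑Q ⊆ 𝔖.D → (⋂ S ∈ Q, S) ∈ 𝔖.D := by
  classical
  intro Q
  induction Q using Finset.induction_on with
  | empty => intro h; exact absurd rfl h.ne_empty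
  | @insert A Q hA ih =>
      intro _ hsub
      rcases Q.eq_empty_or_nonempty with rfl | hQne
      · simpa using hsub (by simp)
      · rw [Finset.set_biInter_insert]
        exact 𝔖.inter_mem _ (hsub (by simp)) _
          (ih hQne (fun S hS => hsub (by simp [hS])))

set_option maxHeartbeats 2000000 in
private lemma ohs_aux {B : Type*} [LinearOrder B] (𝔖 : OrderedHellySystem B) :
    ∀ p q (F : Finset (Set B)), 𝔖.h ≤ q → q ≤ p →
    (𝔖.h - 2) * p < (𝔖.h - 1) * (q - 1) →
    ↑F ⊆ 𝔖.D → (∀ S ∈ F, S.Nonempty) →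
    (∀ G ⊆ F, G.Nonempty → ∃ H, H ⊆ G ∧ H.Nonempty ∧ (⋂ S ∈ H, S).Nonempty ∧
        min q (q + G.card - p) ≤ H.card) →
    ∃ P : Finset B, P.card ≤ p - q + 1 ∧ ∀ S ∈ F, ∃ x ∈ P, x ∈ S := by
  classical
  intro p
  induction p using Nat.strong_induction_on with
  | _ p IH =>
  intro q F hhq hqp hadm hFD hne hstar
  have h2 : 2 ≤ 𝔖.h := 𝔖.two_le_h
  rcases F.eq_empty_or_nonempty with rfl | hFne
  · exact ⟨∅, by simp⟩
  obtain ⟨S₀, hS₀⟩ := hFne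
  obtain ⟨x₀, hx₀⟩ := hne S₀ hS₀
  have hFne : F.Nonempty := ⟨S₀, hS₀⟩
  -- piercing function (choice of a point in each nonempty set)
  set pt : Set B → B := fun S => if hS : S.Nonempty then hS.choose else x₀ with hptdef
  have hptmem : ∀ S ∈ F, pt S ∈ S := by
    intro S hS
    have h1 := hne S hS
    simp only [hptdef, dif_pos h1]
    exact h1.choose_spec
  by_cases hsmallF : F.card ≤ p - q + 1
  · refine ⟨F.image pt, le_trans Finset.card_image_le hsmallF, ?_⟩
    intro S hS
    exact ⟨pt S, Finset.mem_image_of_mem _ hS, hptmem S hS⟩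
  push_neg at hsmallF
  have hFcard : p - q + 2 ≤ F.card := hsmallF
  rcases eq_or_lt_of_le hqp with hpq | hpq
  · -- case p = q
    subst hpq
    have hIF : (⋂ S ∈ F, S).Nonempty := by
      rcases le_or_gt F.card q with hFq | hFq
      · obtain ⟨H, hHG, hHne, hHI, hHcard⟩ := hstar F Finset.Subset.rfl hFne
        have hHF : H = F := by
          apply Finset.eq_of_subset_of_card_le hHG
          omega
        rwa [hHF] at hHI
      · apply 𝔖.helly F (fun S hS => 𝔖.D_subset_C (hFD hS)) (le_trans hhq hFq.le)
        intro G₀ hG₀F hG₀card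
        obtain ⟨G, hG₀G, hGF, hGcard⟩ :=
          Finset.exists_subsuperset_card_eq (n := q - 𝔖.h + G₀.card) hG₀F (by omega) (by omega)
        have hGq : G.card = q := by omega
        have hGne : G.Nonempty := Finset.card_pos.1 (by omega)
        obtain ⟨H, hHG, hHne, hHI, hHcard⟩ := hstar G hGF hGne
        have hHF : H = G := by
          apply Finset.eq_of_subset_of_card_le hHG
          omega
        subst hHF
        exact (hHI.mono (ohs_biInter_mono hG₀G))
    obtain ⟨x, hx⟩ := hIF
    refine ⟨{x}, by simp, ?_⟩
    intro S hS
    exact ⟨x, Finset.mem_singleton_self x, Set.mem_iInter₂.1 hx S hS⟩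
  -- case q < p
  have hq2h : 2 * 𝔖.h ≤ q + 2 := by
    obtain ⟨aa, haa⟩ : ∃ aa, 𝔖.h = aa + 2 := ⟨𝔖.h - 2, by omega⟩
    obtain ⟨b, hb⟩ : ∃ b, q = b + 1 := ⟨q - 1, by omega⟩
    have h1 : aa * (b + 2) ≤ aa * p := Nat.mul_le_mul_left _ (by omega)
    have e1 : 𝔖.h - 2 = aa := by omega
    have e2 : 𝔖.h - 1 = aa + 1 := by omega
    have e3 : q - 1 = b := by omega
    rw [e1, e2, e3] at hadm
    rw [haa, hb]
    nlinarith [h1, hadm]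
  set r := min q (q + F.card - p) with hrdef
  set 𝒮 := F.powerset.filter
    (fun Q => Q.Nonempty ∧ (⋂ S ∈ Q, S).Nonempty ∧ r ≤ Q.card) with h𝒮def
  have hmem𝒮 : ∀ Q, Q ∈ 𝒮 ↔
      (Q ⊆ F ∧ Q.Nonempty ∧ (⋂ S ∈ Q, S).Nonempty ∧ r ≤ Q.card) := by
    intro Q
    simp [h𝒮def, Finset.mem_filter, Finset.mem_powerset, and_assoc]
  have h𝒮ne : 𝒮.Nonempty := by
    obtain ⟨H, hHF, hHne, hHI, hHcard⟩ := hstar F Finset.Subset.rfl hFne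
    exact ⟨H, (hmem𝒮 H).2 ⟨hHF, hHne, hHI, hHcard⟩⟩
  set μ : Finset (Set B) → B := fun Q =>
    if hQ : ∃ x, x ∈ (⋂ S ∈ Q, S) ∧ ∀ y ∈ (⋂ S ∈ Q, S), x ≤ y then hQ.choose else x₀
      with hμdef
  have hμ : ∀ Q ∈ 𝒮, μ Q ∈ (⋂ S ∈ Q, S) ∧ ∀ y ∈ (⋂ S ∈ Q, S), μ Q ≤ y := by
    intro Q hQ
    rw [hmem𝒮] at hQ
    have hD : (⋂ S ∈ Q, S) ∈ 𝔖.D :=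
      ohs_interD 𝔖 Q hQ.2.1 (fun S hS => hFD (hQ.1 hS))
    have hex : ∃ x, x ∈ (⋂ S ∈ Q, S) ∧ ∀ y ∈ (⋂ S ∈ Q, S), x ≤ y :=
      𝔖.attainable_min _ hD hQ.2.2.1
    simp only [hμdef]
    rw [dif_pos hex]
    exact hex.choose_spec
  obtain ⟨Qs, hQs𝒮, hQsmax⟩ := Finset.exists_max_image 𝒮 μ h𝒮ne
  set a := μ Qs with hadef
  have hQsprop := (hmem𝒮 Qs).1 hQs𝒮
  have hQsF : Qs ⊆ F := hQsprop.1
  have hQsne : Qs.Nonempty := hQsprop.2.1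
  have ha := hμ Qs hQs𝒮
  have haS : ∀ S ∈ Qs, a ∈ S := fun S hS => Set.mem_iInter₂.1 ha.1 S hS
  -- extract E
  obtain ⟨E, hEQs, hE1, hEh, hEL⟩ :
      ∃ E : Finset (Set B), E ⊆ Qs ∧ 1 ≤ E.card ∧ E.card ≤ 𝔖.h - 1 ∧
        (∀ x ∈ (⋂ S ∈ E, S), ¬ x < a) := by
    by_cases hQc : Qs.card ≤ 𝔖.h - 1
    · refine ⟨Qs, Finset.Subset.rfl, Finset.card_pos.2 hQsne, hQc, ?_⟩
      intro x hx hxa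
      exact absurd (ha.2 x hx) (not_le.2 hxa)
    · push_neg at hQc
      set L : Set B := {x | x < a} with hLdef
      have hLQs : L ∉ Qs := by
        intro hL
        have : a ∈ L := haS L hL
        exact absurd this (by simp [hLdef])
      set T := insert L Qs with hTdef
      have hTC : ↑T ⊆ 𝔖.C := by
        intro S hS
        simp only [hTdef, Finset.coe_insert, Set.mem_insert_iff] at hS
        rcases hS with rfl | hS
        · exact 𝔖.convex_order a
        · exact 𝔖.D_subset_C (hFD (hQsF hS))
      have hTcard : T.card = Qs.card + 1 := Finset.card_insert_of_notMem hLQs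
      have hTempty : ¬ (⋂ S ∈ T, S).Nonempty := by
        rintro ⟨x, hx⟩
        rw [Set.mem_iInter₂] at hx
        have hxL : x ∈ L := hx L (Finset.mem_insert_self _ _)
        have hxQs : x ∈ ⋂ S ∈ Qs, S :=
          Set.mem_iInter₂.2 fun S hS => hx S (Finset.mem_insert_of_mem hS)
        exact absurd (ha.2 x hxQs) (not_le.2 hxL)
      have h1 : ¬ ∀ G ⊆ T, G.card = 𝔖.h → (⋂ S ∈ G, S).Nonempty := by
        intro hall
        exact hTempty (𝔖.helly T hTC (by omega) hall)
      push_neg at h1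
      obtain ⟨G₀, hG₀T, hG₀card, hG₀empty⟩ := h1
      rw [← Set.not_nonempty_iff_eq_empty] at hG₀empty
      have hLG₀ : L ∈ G₀ := by
        by_contra hL
        have hG₀Qs : G₀ ⊆ Qs := by
          intro S hS
          rcases Finset.mem_insert.1 (hG₀T hS) with rfl | h
          · exact absurd hS hL
          · exact h
        exact hG₀empty ⟨a, Set.mem_iInter₂.2 fun S hS => haS S (hG₀Qs hS)⟩
      refine ⟨G₀.erase L, ?_, ?_, ?_, ?_⟩
      · intro S hS
        obtain ⟨hne', hSG₀⟩ := Finset.mem_erase.1 hS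
        rcases Finset.mem_insert.1 (hG₀T hSG₀) with rfl | h
        · exact absurd rfl hne'
        · exact h
      · rw [Finset.card_erase_of_mem hLG₀, hG₀card]; omega
      · rw [Finset.card_erase_of_mem hLG₀, hG₀card]
      · intro x hx hxa
        apply hG₀empty
        refine ⟨x, Set.mem_iInter₂.2 fun S hS => ?_⟩
        by_cases hSL : S = L
        · subst hSL; exact hxa
        · exact Set.mem_iInter₂.1 hx S (Finset.mem_erase.2 ⟨hSL, hS⟩)
  set F₀ := F.filter (fun S => a ∉ S) with hF₀def
  set F₁ := F.filter (fun S => a ∈ S) with hF₁def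
  have hsplit : F₁.card + F₀.card = F.card := by
    rw [hF₀def, hF₁def]
    exact Finset.card_filter_add_card_filter_not (p := fun S => a ∈ S)
  have hEF₁ : E ⊆ F₁ := by
    intro S hS
    exact Finset.mem_filter.2 ⟨hQsF (hEQs hS), haS S (hEQs hS)⟩
  have hEF₁card : E.card ≤ F₁.card := Finset.card_le_card hEF₁
  by_cases hn : F₀.card ≤ p - q
  · -- a plus one point per set of F₀
    refine ⟨insert a (F₀.image pt), ?_, ?_⟩
    · calc (insert a (F₀.image pt)).card ≤ (F₀.image pt).card + 1 :=
            Finset.card_insert_le _ _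
        _ ≤ F₀.card + 1 := by
            have := Finset.card_image_le (s := F₀) (f := pt)
            omega
        _ ≤ p - q + 1 := by omega
    · intro S hS
      by_cases haS' : a ∈ S
      · exact ⟨a, Finset.mem_insert_self _ _, haS'⟩
      · have hSF₀ : S ∈ F₀ := Finset.mem_filter.2 ⟨hS, haS'⟩
        exact ⟨pt S, Finset.mem_insert_of_mem (Finset.mem_image_of_mem _ hSF₀),
          hptmem S hS⟩
  push_neg at hn
  set e := E.card with hedef
  set p₂ := p - e with hp₂def
  set q₂ := q - e + 1 with hq₂def
  have hadm₂ : (𝔖.h - 2) * p₂ < (𝔖.h - 1) * (q₂ - 1) := by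
    obtain ⟨aa, haa⟩ : ∃ aa, 𝔖.h = aa + 2 := ⟨𝔖.h - 2, by omega⟩
    have heaa : e ≤ aa + 1 := by omega
    have hq₂1 : q₂ - 1 = q - e := by omega
    have e1 : 𝔖.h - 2 = aa := by omega
    have e2 : 𝔖.h - 1 = aa + 1 := by omega
    rw [e1, e2] at hadm ⊢
    rw [hq₂1, hp₂def]
    zify [show e ≤ p by omega, show e ≤ q by omega, show 1 ≤ q by omega] at hadm ⊢
    nlinarith [hadm, heaa]
  have hF₀D : ↑F₀ ⊆ 𝔖.D := fun S hS => hFD (Finset.filter_subset _ _ hS)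
  have hF₀ne : ∀ S ∈ F₀, S.Nonempty := fun S hS => hne S (Finset.filter_subset _ _ hS)
  -- the inherited star property
  have hstar₂ : ∀ G ⊆ F₀, G.Nonempty → ∃ H, H ⊆ G ∧ H.Nonempty ∧
      (⋂ S ∈ H, S).Nonempty ∧ min q₂ (q₂ + G.card - p₂) ≤ H.card := by
    intro G hGF₀ hGne
    by_cases hτ : min q₂ (q₂ + G.card - p₂) ≤ 1
    · obtain ⟨S, hS⟩ := hGne
      have hSF : S ∈ F := Finset.filter_subset _ _ (hGF₀ hS)
      refine ⟨{S}, by simpa using hS, Finset.singleton_nonempty _, by simpa using hne S hSF, ?_⟩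
      simpa using hτ
    push_neg at hτ
    set g := G.card with hgdef
    set c := min p F.card with hcdef
    set g' := min g (c - e) with hg'def
    obtain ⟨G', hG'G, hG'card⟩ := Finset.exists_subset_card_eq (s := G) (n := g') (min_le_left _ _)
    have hG'F₀ : G' ⊆ F₀ := hG'G.trans hGF₀
    have hdisj : Disjoint G' E := by
      rw [Finset.disjoint_left]
      intro S hSG' hSE
      exact (Finset.mem_filter.1 (hG'F₀ hSG')).2 ((Finset.mem_filter.1 (hEF₁ hSE)).2)
    have hGEcard : (G' ∪ E).card = g' + e := by
      rw [Finset.card_union_of_disjoint hdisj, hG'card]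
    have hGEF : G' ∪ E ⊆ F :=
      Finset.union_subset (hG'F₀.trans (Finset.filter_subset _ _)) (hEQs.trans hQsF)
    have hgG : g ≤ F₀.card := Finset.card_le_card hGF₀
    have hge : g' + e ≤ c := by omega
    obtain ⟨P', hGEP', hP'F, hP'card⟩ :=
      Finset.exists_subsuperset_card_eq (n := c - (g' + e) + (G' ∪ E).card) hGEF (by omega) (by rw [hGEcard]; omega)
    have hP'c : P'.card = c := by rw [hP'card, hGEcard]; omega
    have hG'P' : G' ⊆ P' := (Finset.subset_union_left).trans hGEP'
    have hEP' : E ⊆ P' := (Finset.subset_union_right).trans hGEP'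
    have hP'ne : P'.Nonempty := by
      rw [← Finset.card_pos, hP'c]
      omega
    obtain ⟨H, hHP', hHne, hHI, hHcard⟩ := hstar P' hP'F hP'ne
    rw [hP'c] at hHcard
    have hH𝒮 : H ∈ 𝒮 := by
      rw [hmem𝒮]
      exact ⟨hHP'.trans hP'F, hHne, hHI, by omega⟩
    have hm := hμ H hH𝒮
    have hma : μ H ≤ a := hQsmax H hH𝒮
    -- Claim A: some member of H avoids a
    have hHavoid : ∃ S ∈ H, a ∉ S := by
      by_contra hall
      push_neg at hall
      have hHsub : H ⊆ P' \ G' := by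
        intro S hS
        refine Finset.mem_sdiff.2 ⟨hHP' hS, fun hSG' => ?_⟩
        exact (Finset.mem_filter.1 (hG'F₀ hSG')).2 (hall S hS)
      have hHle : H.card ≤ c - g' := by
        have h1 := Finset.card_le_card hHsub
        rwa [Finset.card_sdiff_of_subset hG'P', hP'c, hG'card] at h1
      omega
    obtain ⟨Sw, hSwH, hSwa⟩ := hHavoid
    have hmSw : μ H ∈ Sw := Set.mem_iInter₂.1 hm.1 Sw hSwH
    have hmlt : μ H < a := by
      rcases lt_or_eq_of_le hma with h | h
      · exact h
      · exact absurd (h ▸ hmSw) hSwa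
    have hEnotH : ¬ E ⊆ H := by
      intro hEH
      exact hEL (μ H) (ohs_biInter_mono hEH hm.1) hmlt
    obtain ⟨Se, hSeE, hSeH⟩ := Finset.not_subset.1 hEnotH
    have hcount : H.card ≤ (H ∩ G').card + (c - g' - 1) := by
      have h1 : H \ G' ⊆ (P' \ G').erase Se := by
        intro S hS
        obtain ⟨hSH, hSG'⟩ := Finset.mem_sdiff.1 hS
        refine Finset.mem_erase.2 ⟨fun h => hSeH (h ▸ hSH), Finset.mem_sdiff.2 ⟨hHP' hSH, hSG'⟩⟩
      have hSeP' : Se ∈ P' \ G' := by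
        refine Finset.mem_sdiff.2 ⟨hEP' hSeE, fun hSG' => ?_⟩
        exact (Finset.disjoint_left.1 hdisj) hSG' hSeE
      have h2 : (H \ G').card ≤ c - g' - 1 := by
        have h3 := Finset.card_le_card h1
        rwa [Finset.card_erase_of_mem hSeP', Finset.card_sdiff_of_subset hG'P', hP'c, hG'card] at h3
      have h4 : (H ∩ G').card + (H \ G').card = H.card :=
        Finset.card_inter_add_card_sdiff H G'
      omega
    have hHG'card : min q₂ (q₂ + g - p₂) ≤ (H ∩ G').card := by omega
    refine ⟨H ∩ G', (Finset.inter_subset_right).trans hG'G, ?_, ?_, hHG'card⟩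
    · rw [← Finset.card_pos]
      omega
    · exact ⟨μ H, ohs_biInter_mono (Finset.inter_subset_left) hm.1⟩
  obtain ⟨P₂, hP₂card, hP₂⟩ := IH p₂ (by omega) q₂ F₀ (by omega) (by omega) hadm₂
    hF₀D hF₀ne hstar₂
  refine ⟨insert a P₂, ?_, ?_⟩
  · have h1 := Finset.card_insert_le a P₂
    have h2 : p₂ - q₂ + 1 = p - q := by omega
    omega
  · intro S hS
    by_cases haS' : a ∈ S
    · exact ⟨a, Finset.mem_insert_self _ _, haS'⟩
    · obtain ⟨x, hx₁, hx₂⟩ := hP₂ S (Finset.mem_filter.2 ⟨hS, haS'⟩)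
      exact ⟨x, Finset.mem_insert_of_mem hx₁, hx₂⟩

theorem stmt_8 {B : Type*} [LinearOrder B] (𝔖 : OrderedHellySystem B)
    {p q : ℕ} (hq : 𝔖.h ≤ q) (hpq : q ≤ p)
    (hadm : (𝔖.h - 2) * p < (𝔖.h - 1) * (q - 1))
    (F : Finset (Set B)) (hFD : ↑F ⊆ 𝔖.D) (hne : ∀ S ∈ F, S.Nonempty)
    (hcard : p ≤ F.card)
    (hP : ∀ G ⊆ F, G.card = p → ∃ H ⊆ G, H.card = q ∧ (⋂ S ∈ H, S).Nonempty) :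
    ∃ P : Finset B, P.card ≤ p - q + 1 ∧ ∀ S ∈ F, ∃ x ∈ P, x ∈ S := by
  classical
  have h2 : 2 ≤ 𝔖.h := 𝔖.two_le_h
  have hstar : ∀ G ⊆ F, G.Nonempty → ∃ H, H ⊆ G ∧ H.Nonempty ∧
      (⋂ S ∈ H, S).Nonempty ∧ min q (q + G.card - p) ≤ H.card := by
    intro G hGF hGne
    rcases le_or_gt p G.card with hpG | hpG
    · obtain ⟨G₁, hG₁G, hG₁card⟩ := Finset.exists_subset_card_eq (s := G) (n := p) hpG
      obtain ⟨H, hHG₁, hHcard, hHI⟩ := hP G₁ (hG₁G.trans hGF) hG₁card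
      refine ⟨H, hHG₁.trans hG₁G, Finset.card_pos.1 (by omega), hHI, ?_⟩
      have := min_le_left q (q + G.card - p)
      omega
    · by_cases hτ : min q (q + G.card - p) ≤ 1
      · obtain ⟨S, hS⟩ := hGne
        refine ⟨{S}, by simpa using hS, Finset.singleton_nonempty _,
          by simpa using hne S (hGF hS), ?_⟩
        simpa using hτ
      · push_neg at hτ
        obtain ⟨P', hGP', hP'F, hP'card⟩ :=
          Finset.exists_subsuperset_card_eq (n := p - G.card + G.card) hGF (by omega) (by omega)
        have hP'c : P'.card = p := by omega
        obtain ⟨H, hHP', hHcard, hHI⟩ := hP P' hP'F hP'c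
        have h1 : H \ G ⊆ P' \ G := Finset.sdiff_subset_sdiff hHP' Finset.Subset.rfl
        have h2' : (H \ G).card ≤ p - G.card := by
          have := Finset.card_le_card h1
          rwa [Finset.card_sdiff_of_subset hGP', hP'c] at this
        have h4 : (H ∩ G).card + (H \ G).card = H.card :=
          Finset.card_inter_add_card_sdiff H G
        refine ⟨H ∩ G, Finset.inter_subset_right, ?_, ?_, by omega⟩
        · rw [← Finset.card_pos]; omega
        · exact hHI.mono (ohs_biInter_mono (Finset.inter_subset_left))
  exact ohs_aux 𝔖 p q F hq hpq hadm hFD hne hstar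
end

section
/- In a convex geometry $(E, \mathcal{N})$ on a finite set $E$, a subset $X \subseteq E$ is convex if and only if there exists a shelling sequence $x_1, \ldots, x_k$ such that $X = E \setminus \{x_1, \ldots, x_k\}$. -/
/-- Closure operator of a set family: intersection of all members containing `A`. -/
def cgClosure {E : Type*} (N : Set (Set E)) (A : Set E) : Set E :=
  ⋂₀ {X | X ∈ N ∧ A ⊆ X}

/-- A convex geometry on `E`. -/
structure IsConvexGeometry {E : Type*} (N : Set (Set E)) : Prop where
  empty_mem : ∅ ∈ N
  univ_mem : Set.univ ∈ N
  inter_mem : ∀ X ∈ N, ∀ Y ∈ N, X ∩ Y ∈ N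
  anti_exchange : ∀ (X : Set E) (y z : E), y ≠ z →
    y ∉ cgClosure N X → z ∉ cgClosure N X →
    z ∈ cgClosure N (X ∪ {y}) → y ∉ cgClosure N (X ∪ {z})

/-- `x` is an extreme point of `A`. -/
def IsExtremePt {E : Type*} (N : Set (Set E)) (A : Set E) (x : E) : Prop :=
  x ∈ A ∧ x ∉ cgClosure N (A \ {x})

/-- A shelling sequence: each element is extreme in what remains of `E`. -/
def IsShellingSeq {E : Type*} (N : Set (Set E)) (L : List E) : Prop :=
  ∀ i : Fin L.length, IsExtremePt N {y | y ∉ L.take i.val} (L.get i)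

section aux
variable {E : Type*} (N : Set (Set E))

lemma cg_subset_closure (A : Set E) : A ⊆ cgClosure N A := by
  intro a ha
  rw [cgClosure, Set.mem_sInter]
  exact fun X hX => hX.2 ha

lemma cg_closure_min {A B : Set E} (hB : B ∈ N) (h : A ⊆ B) : cgClosure N A ⊆ B := by
  intro a ha
  rw [cgClosure, Set.mem_sInter] at ha
  exact ha B ⟨hB, h⟩

lemma cg_sInter_mem [Fintype E] (hN : IsConvexGeometry N) :
    ∀ S : Set (Set E), S ⊆ N → ⋂₀ S ∈ N := by
  intro S
  refine Set.Finite.induction_on (motive := fun S _ => S ⊆ N → ⋂₀ S ∈ N) S (Set.toFinite S) ?_ ?_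
  · intro _; simpa using hN.univ_mem
  · intro a s _ _ ih hsub
    rw [Set.sInter_insert]
    exact hN.inter_mem a (hsub (Set.mem_insert a s)) _
      (ih (fun x hx => hsub (Set.mem_insert_of_mem a hx)))

lemma cg_closure_mem [Fintype E] (hN : IsConvexGeometry N) (A : Set E) :
    cgClosure N A ∈ N :=
  cg_sInter_mem N hN _ (fun _ hX => hX.1)

lemma cg_closure_eq {A : Set E} (hA : A ∈ N) : cgClosure N A = A :=
  subset_antisymm (cg_closure_min N hA subset_rfl) (cg_subset_closure N A)

/-- Key lemma: a convex set `A ≠ univ` can be extended by one point to a convex set. -/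
lemma cg_exists_add [Fintype E] (hN : IsConvexGeometry N) (A : Set E) (hA : A ∈ N)
    (hne : A ≠ Set.univ) : ∃ x ∉ A, A ∪ {x} ∈ N := by
  obtain ⟨x0, hx0⟩ : ∃ x, x ∉ A := by
    by_contra h; push_neg at h; exact hne (Set.eq_univ_of_forall h)
  suffices H : ∀ n : ℕ, ∀ x ∉ A, (cgClosure N (A ∪ {x})).ncard ≤ n → ∃ x ∉ A, A ∪ {x} ∈ N from
    H _ x0 hx0 le_rfl
  intro n
  induction n with
  | zero =>
    intro x hx h0
    exfalso
    have hxc : x ∈ cgClosure N (A ∪ {x}) := cg_subset_closure N _ (Or.inr rfl)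
    have := (Set.ncard_pos (Set.toFinite _)).mpr ⟨x, hxc⟩
    omega
  | succ n ih =>
    intro x hx hle
    by_cases hc : cgClosure N (A ∪ {x}) = A ∪ {x}
    · exact ⟨x, hx, hc ▸ cg_closure_mem N hN _⟩
    · have hsub : A ∪ {x} ⊆ cgClosure N (A ∪ {x}) := cg_subset_closure N _
      obtain ⟨z, hz, hznot⟩ : ∃ z ∈ cgClosure N (A ∪ {x}), z ∉ A ∪ {x} := by
        by_contra h; push_neg at h; exact hc (subset_antisymm h hsub)
      have hzA : z ∉ A := fun h => hznot (Or.inl h)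
      have hxz : x ≠ z := fun h => hznot (Or.inr h.symm)
      have hclA : cgClosure N A = A := cg_closure_eq N hA
      have hax := hN.anti_exchange A x z hxz (by rw [hclA]; exact hx)
        (by rw [hclA]; exact hzA) hz
      have hsub2 : cgClosure N (A ∪ {z}) ⊆ cgClosure N (A ∪ {x}) := by
        apply cg_closure_min N (cg_closure_mem N hN _)
        intro a ha
        rcases ha with ha | ha
        · exact hsub (Or.inl ha)
        · rw [Set.mem_singleton_iff] at ha; subst ha; exact hz
      have hxin : x ∈ cgClosure N (A ∪ {x}) := hsub (Or.inr rfl)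
      have hss : cgClosure N (A ∪ {z}) ⊂ cgClosure N (A ∪ {x}) :=
        ⟨hsub2, fun h => hax (h hxin)⟩
      have hlt := Set.ncard_lt_ncard hss (Set.toFinite _)
      exact ih z hzA (by omega)

lemma cg_exists_shelling [Fintype E] (hN : IsConvexGeometry N) (X : Set E) (hX : X ∈ N) :
    ∃ L : List E, IsShellingSeq N L ∧ X = {y | y ∉ L} := by
  suffices H : ∀ n : ℕ, ∀ X : Set E, X ∈ N → Xᶜ.ncard ≤ n →
      ∃ L : List E, IsShellingSeq N L ∧ X = {y | y ∉ L} from H _ X hX le_rfl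
  intro n
  induction n with
  | zero =>
    intro X hX h0
    have h1 : Xᶜ = ∅ := by
      rw [← Set.ncard_eq_zero (Set.toFinite _)]; omega
    have hXu : X = Set.univ := by rw [← Set.compl_empty_iff, h1]
    refine ⟨[], ?_, ?_⟩
    · intro i; exact absurd i.isLt (by simp)
    · simp [hXu]
  | succ n ih =>
    intro X hX hle
    by_cases hu : X = Set.univ
    · refine ⟨[], ?_, ?_⟩
      · intro i; exact absurd i.isLt (by simp)
      · simp [hu]
    · obtain ⟨x, hx, hx2⟩ := cg_exists_add N hN X hX hu
      have hcompl : (X ∪ {x})ᶜ ⊂ Xᶜ := by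
        constructor
        · exact Set.compl_subset_compl.mpr Set.subset_union_left
        · intro h
          exact (h (by simp [hx] : x ∈ Xᶜ)) (Or.inr rfl)
      have hlt := Set.ncard_lt_ncard hcompl (Set.toFinite _)
      obtain ⟨L', hL', hEq⟩ := ih (X ∪ {x}) hx2 (by omega)
      have hxL' : x ∉ L' := by
        have hxm : x ∈ X ∪ {x} := Or.inr rfl
        rw [hEq] at hxm; exact hxm
      refine ⟨L' ++ [x], ?_, ?_⟩
      · intro i
        have hilen : i.val < L'.length + 1 := by simpa using i.isLt
        rcases lt_or_eq_of_le (Nat.lt_succ_iff.mp hilen) with hi | hi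
        · have htake : (L' ++ [x]).take i.val = L'.take i.val :=
            List.take_append_of_le_length (le_of_lt hi)
          have hget : (L' ++ [x]).get i = L'.get ⟨i.val, hi⟩ := by
            rw [List.get_eq_getElem, List.get_eq_getElem]
            rw [List.getElem_append_left]
          rw [htake, hget]
          exact hL' ⟨i.val, hi⟩
        · have htake : (L' ++ [x]).take i.val = L' := by
            rw [hi, List.take_append_of_le_length le_rfl, List.take_length]
          have hget : (L' ++ [x]).get i = x := by
            rw [List.get_eq_getElem]
            simp [hi]
          rw [htake, hget]
          refine ⟨hxL', ?_⟩
          have hset : {y | y ∉ L'} \ {x} = X := by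
            rw [← hEq, Set.union_singleton, Set.insert_diff_self_of_notMem hx]
          rw [hset, cg_closure_eq N hX]
          exact hx
      · ext y
        simp only [Set.mem_setOf_eq, List.mem_append, List.mem_singleton]
        constructor
        · intro hy h
          rcases h with h | h
          · have hym : y ∈ X ∪ {x} := Or.inl hy
            rw [hEq] at hym; exact hym h
          · subst h; exact hx hy
        · intro h
          push_neg at h
          have hym : y ∈ X ∪ {x} := by rw [hEq]; exact h.1
          rcases hym with h' | h'
          · exact h'
          · exact absurd h' h.2

lemma cg_shelling_convex [Fintype E] (hN : IsConvexGeometry N) (L : List E)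
    (hL : IsShellingSeq N L) : ∀ i ≤ L.length, {y | y ∉ L.take i} ∈ N := by
  intro i
  induction i with
  | zero => intro _; simpa using hN.univ_mem
  | succ i ih =>
    intro hi
    have hi' : i < L.length := hi
    have hCi := ih (le_of_lt hi')
    have hext := hL ⟨i, hi'⟩
    set x := L.get ⟨i, hi'⟩ with hx
    have hstep : {y | y ∉ L.take (i+1)} = {y | y ∉ L.take i} \ {x} := by
      ext y
      simp only [Set.mem_setOf_eq, Set.mem_diff, Set.mem_singleton_iff]
      rw [← List.take_concat_get (l := L) (i := i) hi']
      simp only [List.concat_eq_append, List.mem_append, List.mem_singleton]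
      have : L[i] = x := rfl
      rw [this]
      tauto
    rw [hstep]
    obtain ⟨hx1, hx2⟩ := hext
    have h1 : cgClosure N ({y | y ∉ L.take i} \ {x}) ⊆ {y | y ∉ L.take i} :=
      cg_closure_min N hCi Set.diff_subset
    have h2 : cgClosure N ({y | y ∉ L.take i} \ {x}) = {y | y ∉ L.take i} \ {x} := by
      apply subset_antisymm
      · intro a ha
        refine ⟨h1 ha, ?_⟩
        rw [Set.mem_singleton_iff]
        rintro rfl
        exact hx2 ha
      · exact cg_subset_closure N _
    rw [← h2]
    exact cg_closure_mem N hN _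

end aux

theorem stmt_13 {E : Type*} [Fintype E] (N : Set (Set E))
    (hN : IsConvexGeometry N) (X : Set E) :
    X ∈ N ↔ ∃ L : List E, IsShellingSeq N L ∧ X = {y | y ∉ L} := by
  constructor
  · exact cg_exists_shelling N hN X
  · rintro ⟨L, hL, rfl⟩
    have h := cg_shelling_convex N hN L hL L.length le_rfl
    simpa using h
end

section
/- Let $(E, \mathcal{N})$ be a convex geometry on a finite set, let $h$ be the maximum size of a free convex set, and let $p \geq q \geq h$ be integers with $(h-2)p < (h-1)(q-1)$. If $\mathcal{F} \subseteq \mathcal{N}$ is a family of $n \geq p$ nonempty convex sets with the $(p,q)$-property, then there exist $p-q+1$ elements of $E$ stabbing $\mathcal{F}$. -/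
/-- A set is free if all its points are extreme in it. -/
def IsFree {E : Type*} (N : Set (Set E)) (X : Set E) : Prop :=
  ∀ x ∈ X, x ∉ cgClosure N (X \ {x})

namespace CGaux

variable {E : Type*} {N : Set (Set E)}

lemma subset_cg (A : Set E) : A ⊆ cgClosure N A := by
  intro a ha
  simp only [cgClosure, Set.mem_sInter, Set.mem_setOf_eq]
  exact fun X hX => hX.2 ha

lemma cg_subset {X A : Set E} (hX : X ∈ N) (hAX : A ⊆ X) : cgClosure N A ⊆ X :=
  Set.sInter_subset_of_mem ⟨hX, hAX⟩

lemma cg_mono {A B : Set E} (hAB : A ⊆ B) : cgClosure N A ⊆ cgClosure N B := by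
  intro a ha
  simp only [cgClosure, Set.mem_sInter, Set.mem_setOf_eq] at *
  exact fun X hX => ha X ⟨hX.1, hAB.trans hX.2⟩

lemma sInter_mem [Fintype E] (hN : IsConvexGeometry N) (S : Set (Set E)) :
    S ⊆ N → S.Nonempty → ⋂₀ S ∈ N := by
  refine Set.Finite.induction_on (motive := fun S _ => S ⊆ N → S.Nonempty → ⋂₀ S ∈ N) S
    (Set.toFinite S) (by simp) ?_
  intro X S' hXS' hfin ih hS hSne
  rw [Set.sInter_insert]
  rcases S'.eq_empty_or_nonempty with rfl | hne
  · simpa using hS (Set.mem_insert _ _)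
  · exact hN.inter_mem _ (hS (Set.mem_insert _ _)) _
      (ih (fun T hT => hS (Set.mem_insert_of_mem _ hT)) hne)

lemma cg_mem [Fintype E] (hN : IsConvexGeometry N) (A : Set E) : cgClosure N A ∈ N := by
  apply sInter_mem hN
  · exact fun X hX => hX.1
  · exact ⟨Set.univ, hN.univ_mem, Set.subset_univ _⟩

lemma cg_self {X : Set E} (hX : X ∈ N) : cgClosure N X = X :=
  Set.Subset.antisymm (cg_subset hX Set.Subset.rfl) (subset_cg X)

lemma cg_idem [Fintype E] (hN : IsConvexGeometry N) (A : Set E) :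
    cgClosure N (cgClosure N A) = cgClosure N A :=
  cg_self (cg_mem hN A)

/-- extension lemma: any convex set other than univ extends by one point to a convex set -/
lemma exists_extension [Fintype E] (hN : IsConvexGeometry N) {X : Set E} (hX : X ∈ N)
    (hXu : X ≠ Set.univ) : ∃ x ∉ X, X ∪ {x} ∈ N := by
  classical
  -- minimal proper convex superset
  set cand : Set ℕ := {n | ∃ D ∈ N, X ⊂ D ∧ D.ncard = n} with hcand
  have hc : (Set.univ : Set E).ncard ∈ cand :=
    ⟨Set.univ, hN.univ_mem, Set.ssubset_univ_iff.2 hXu, rfl⟩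
  obtain ⟨D, hD, hXD, hDn⟩ := Nat.sInf_mem ⟨_, hc⟩
  have hmin : ∀ D' ∈ N, X ⊂ D' → D.ncard ≤ D'.ncard := by
    intro D' hD' hXD'
    rw [hDn]
    exact Nat.sInf_le ⟨D', hD', hXD', rfl⟩
  have key : ∀ y ∈ D \ X, cgClosure N (X ∪ {y}) = D := by
    intro y hy
    have h1 : cgClosure N (X ∪ {y}) ⊆ D :=
      cg_subset hD (Set.union_subset hXD.subset (by simpa using hy.1))
    have h2 : X ⊂ cgClosure N (X ∪ {y}) := by
      constructor
      · exact (Set.subset_union_left).trans (subset_cg _)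
      · intro hsub
        exact hy.2 (hsub (subset_cg _ (Set.mem_union_right _ rfl)))
    exact Set.eq_of_subset_of_ncard_le h1 (hmin _ (cg_mem hN _) h2) (Set.toFinite D)
  obtain ⟨y, hy⟩ := Set.nonempty_of_ssubset hXD
  have huniq : D \ X = {y} := by
    apply Set.eq_singleton_iff_unique_mem.2 ⟨hy, ?_⟩
    intro z hz
    by_contra hzy
    have h1 := key y hy
    have h2 := key z hz
    have hyX : y ∉ cgClosure N X := by rw [cg_self hX]; exact hy.2
    have hzX : z ∉ cgClosure N X := by rw [cg_self hX]; exact hz.2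
    have : z ∈ cgClosure N (X ∪ {y}) := h1 ▸ hz.1
    have := hN.anti_exchange X y z (Ne.symm hzy) hyX hzX this
    exact this (h2 ▸ hy.1)
  refine ⟨y, hy.2, ?_⟩
  have : X ∪ {y} = D := by
    rw [← huniq]
    rw [Set.union_diff_cancel' (by simp) hXD.subset]
  rwa [this]

end CGaux
namespace CGaux

variable {E : Type*} {N : Set (Set E)} [Fintype E]

attribute [local instance] Classical.propDecidable

set_option linter.unusedSectionVars false

noncomputable def chainStep (N : Set (Set E)) (X : Set E) : Set E :=
  if h : ∃ x, x ∉ X ∧ X ∪ {x} ∈ N then X ∪ {h.choose} else X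

lemma subset_chainStep (N : Set (Set E)) (X : Set E) : X ⊆ chainStep N X := by
  unfold chainStep
  split
  · exact Set.subset_union_left
  · exact Set.Subset.rfl

lemma chainStep_mem (hX : X ∈ N) : chainStep N X ∈ N := by
  unfold chainStep
  split
  · next h => exact h.choose_spec.2
  · exact hX

lemma chainStep_diff (N : Set (Set E)) (X : Set E) : (chainStep N X \ X).Subsingleton := by
  unfold chainStep
  split
  · next h =>
    intro a ha b hb
    have ha' : a = h.choose := by
      rcases ha.1 with h' | h'
      · exact absurd h' ha.2
      · exact h'
    have hb' : b = h.choose := by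
      rcases hb.1 with h' | h'
      · exact absurd h' hb.2
      · exact h'
    rw [ha', hb']
  · simp [Set.Subsingleton]

lemma chainStep_grow (hN : IsConvexGeometry N) {X : Set E} (hX : X ∈ N)
    (hXu : X ≠ Set.univ) : X ⊂ chainStep N X := by
  obtain ⟨x, hx, hx2⟩ := exists_extension hN hX hXu
  have hex : ∃ x, x ∉ X ∧ X ∪ {x} ∈ N := ⟨x, hx, hx2⟩
  unfold chainStep
  rw [dif_pos hex]
  constructor
  · exact Set.subset_union_left
  · intro hsub
    exact hex.choose_spec.1 (hsub (Set.mem_union_right _ rfl))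

noncomputable def chain (N : Set (Set E)) (k : ℕ) : Set E := (chainStep N)^[k] ∅

lemma chain_zero : chain N 0 = (∅ : Set E) := rfl

lemma chain_succ (k : ℕ) : chain N (k + 1) = chainStep N (chain N k) :=
  Function.iterate_succ_apply' _ _ _

lemma chain_mem (hN : IsConvexGeometry N) (k : ℕ) : chain N k ∈ N := by
  induction k with
  | zero => exact hN.empty_mem
  | succ k ih => rw [chain_succ]; exact chainStep_mem ih

lemma chain_mono {k l : ℕ} (hkl : k ≤ l) : chain N k ⊆ chain N l := by
  induction l with
  | zero => simp_all
  | succ l ih =>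
    rcases Nat.lt_or_ge k (l+1) with h | h
    · exact (ih (Nat.lt_succ_iff.1 h)).trans (by rw [chain_succ]; exact subset_chainStep _ _)
    · have : k = l + 1 := le_antisymm hkl h
      rw [this]

lemma exists_chain_univ (hN : IsConvexGeometry N) : ∃ K, chain N K = (Set.univ : Set E) := by
  by_contra hcon
  push_neg at hcon
  have key : ∀ k, k ≤ (chain N k).ncard := by
    intro k
    induction k with
    | zero => simp
    | succ k ih =>
      have hss : chain N k ⊂ chain N (k+1) := by
        rw [chain_succ]
        exact chainStep_grow hN (chain_mem hN k) (hcon k)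
      have := Set.ncard_lt_ncard hss (Set.toFinite _)
      omega
  have h1 := key (Fintype.card E + 1)
  have h2 : (chain N (Fintype.card E + 1)).ncard ≤ Fintype.card E := by
    have := Set.ncard_le_ncard (Set.subset_univ (chain N (Fintype.card E + 1)))
      (Set.toFinite _)
    simpa [Set.ncard_univ] using this
  omega

noncomputable def nu (N : Set (Set E)) (S : Set E) : ℕ :=
  sInf {k | (S ∩ chain N k).Nonempty}

lemma nu_spec (hN : IsConvexGeometry N) {S : Set E} (hS : S.Nonempty) :
    (S ∩ chain N (nu N S)).Nonempty := by
  obtain ⟨K, hK⟩ := exists_chain_univ (N := N) hN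
  have h := Nat.sInf_mem (s := {k | (S ∩ chain N k).Nonempty}) ⟨K, by simpa [hK]⟩
  exact h

lemma nu_le {S : Set E} {k : ℕ} (hk : (S ∩ chain N k).Nonempty) : nu N S ≤ k :=
  Nat.sInf_le hk

lemma nu_empty_of_lt {S : Set E} {k : ℕ} (hk : k < nu N S) : S ∩ chain N k = ∅ := by
  by_contra hne
  exact absurd (nu_le (Set.nonempty_iff_ne_empty.2 hne)) (by omega)

lemma nu_mono (hN : IsConvexGeometry N) {S T : Set E} (hS : S.Nonempty) (hST : S ⊆ T) :
    nu N T ≤ nu N S :=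
  nu_le ((nu_spec hN hS).mono (Set.inter_subset_inter_left _ hST))

lemma nu_pos (hN : IsConvexGeometry N) {S : Set E} (hS : S.Nonempty) : 0 < nu N S := by
  rcases Nat.eq_zero_or_pos (nu N S) with h | h
  · have := nu_spec hN hS
    rw [h] at this
    simp [chain_zero] at this
  · exact h

lemma nu_subsingleton (hN : IsConvexGeometry N) {S : Set E} (hS : S.Nonempty) :
    (S ∩ chain N (nu N S)).Subsingleton := by
  have hpos := nu_pos hN hS
  have hprev : S ∩ chain N (nu N S - 1) = ∅ := nu_empty_of_lt (by omega)
  have hstep : chain N (nu N S) = chainStep N (chain N (nu N S - 1)) := by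
    conv_lhs => rw [show nu N S = (nu N S - 1) + 1 by omega]
    exact chain_succ _
  intro x hx y hy
  have hx' : x ∈ chainStep N (chain N (nu N S - 1)) \ chain N (nu N S - 1) := by
    simp only [Set.mem_diff]
    constructor
    · rw [← hstep]; exact hx.2
    · intro hc
      exact (Set.eq_empty_iff_forall_notMem.1 hprev x) ⟨hx.1, hc⟩
  have hy' : y ∈ chainStep N (chain N (nu N S - 1)) \ chain N (nu N S - 1) := by
    simp only [Set.mem_diff]
    constructor
    · rw [← hstep]; exact hy.2
    · intro hc
      exact (Set.eq_empty_iff_forall_notMem.1 hprev y) ⟨hy.1, hc⟩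
  exact chainStep_diff N _ hx' hy'

end CGaux
namespace CGaux

variable {E : Type*} {N : Set (Set E)} [Fintype E]

attribute [local instance] Classical.propDecidable

set_option linter.unusedSectionVars false

def fInt (G : Finset (Set E)) : Set E := ⋂ S ∈ G, S

lemma mem_fInt {G : Finset (Set E)} {x : E} : x ∈ fInt G ↔ ∀ S ∈ G, x ∈ S := by
  simp [fInt]

lemma fInt_anti {G G' : Finset (Set E)} (hGG : G ⊆ G') : fInt G' ⊆ fInt G := by
  intro x hx
  rw [mem_fInt] at *
  exact fun S hS => hx S (hGG hS)

lemma fInt_erase {G : Finset (Set E)} {S : Set E} (hS : S ∈ G) :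
    fInt G = S ∩ fInt (G.erase S) := by
  ext x
  simp only [mem_fInt, Set.mem_inter_iff]
  constructor
  · exact fun hx => ⟨hx S hS, fun T hT => hx T (Finset.mem_of_mem_erase hT)⟩
  · rintro ⟨h1, h2⟩ T hT
    rcases eq_or_ne T S with rfl | hTS
    · exact h1
    · exact h2 T (Finset.mem_erase.2 ⟨hTS, hT⟩)

lemma fInt_mem (hN : IsConvexGeometry N) {G : Finset (Set E)} (hG : ↑G ⊆ N)
    (hne : G.Nonempty) : fInt G ∈ N := by
  classical
  induction G using Finset.induction_on with
  | empty => exact absurd hne (by simp)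
  | @insert S G hSG ih =>
    have : fInt (insert S G) = S ∩ fInt G := by
      ext x; simp [mem_fInt]
    rw [this]
    rcases G.eq_empty_or_nonempty with rfl | hGne
    · have : S ∈ N := hG (by simp)
      simpa [fInt] using this
    · exact hN.inter_mem _ (hG (by simp)) _
        (ih (fun T hT => hG (by simp [hT])) hGne)

lemma biInter_mem (hN : IsConvexGeometry N) {G : Finset (Set E)} (g : Set E → Set E)
    (hg : ∀ S ∈ G, g S ∈ N) (hne : G.Nonempty) : (⋂ S ∈ G, g S) ∈ N := by
  classical
  have heq : (⋂ S ∈ G, g S) = fInt (G.image g) := by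
    ext x
    simp [mem_fInt]
  rw [heq]
  apply fInt_mem hN
  · intro T hT
    simp only [Finset.coe_image, Set.mem_image, Finset.mem_coe] at hT
    obtain ⟨S, hS, rfl⟩ := hT
    exact hg S hS
  · exact hne.image g

lemma construct (hN : IsConvexGeometry N) (A : Finset (Set E)) (hA : ↑A ⊆ N)
    (hI : fInt A = ∅) (herase : ∀ S ∈ A, (fInt (A.erase S)).Nonempty)
    (hAne : A.Nonempty)
    (hmax : ∀ S ∈ A, ∀ M ∈ N, S ⊆ M → M ∩ fInt (A.erase S) = ∅ → M = S) :
    ∃ Y ∈ N, IsFree N Y ∧ Y.ncard = A.card := by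
  classical
  have hEne : Nonempty E := by
    obtain ⟨S, hS⟩ := hAne
    obtain ⟨x, _⟩ := herase S hS
    exact ⟨x⟩
  have key : ∀ S ∈ A, ∃ x, x ∉ S ∧ S ∪ {x} ∈ N ∧ x ∈ fInt (A.erase S) := by
    intro S hS
    have hSN : S ∈ N := hA hS
    have hSu : S ≠ Set.univ := by
      intro hu
      obtain ⟨t, ht⟩ := herase S hS
      have : t ∈ fInt A := by
        rw [fInt_erase hS]
        exact ⟨by rw [hu]; trivial, ht⟩
      rw [hI] at this
      exact this
    obtain ⟨x, hx1, hx2⟩ := exists_extension hN hSN hSu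
    have hne : (S ∪ {x}) ∩ fInt (A.erase S) ≠ ∅ := by
      intro hc
      have := hmax S hS (S ∪ {x}) hx2 Set.subset_union_left hc
      exact hx1 (this ▸ Set.mem_union_right _ rfl : x ∈ S)
    obtain ⟨t, ht1, ht2⟩ := Set.nonempty_iff_ne_empty.2 hne
    have htx : t = x := by
      rcases ht1 with h | h
      · exfalso
        have : t ∈ fInt A := by
          rw [fInt_erase hS]
          exact ⟨h, ht2⟩
        rw [hI] at this
        exact this
      · exact h
    exact ⟨x, hx1, hx2, htx ▸ ht2⟩
  choose! f hf1 hf2 hf3 using key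
  have hinj : Set.InjOn f ↑A := by
    intro S hS T hT hST
    by_contra hne
    have h1 : f T ∈ S := mem_fInt.1 (hf3 T hT) S (Finset.mem_erase.2 ⟨hne, hS⟩)
    rw [← hST] at h1
    exact hf1 S hS h1
  refine ⟨↑(A.image f), ?_, ?_, ?_⟩
  · have hYeq : (↑(A.image f) : Set E) = ⋂ S ∈ A, (S ∪ {f S}) := by
      ext y
      simp only [Finset.coe_image, Set.mem_image, Finset.mem_coe, Set.mem_iInter]
      constructor
      · rintro ⟨T, hT, rfl⟩ S hS
        rcases eq_or_ne S T with rfl | hST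
        · exact Set.mem_union_right _ rfl
        · exact Set.mem_union_left _
            (mem_fInt.1 (hf3 T hT) S (Finset.mem_erase.2 ⟨hST, hS⟩))
      · intro hy
        have : ¬ y ∈ fInt A := by rw [hI]; exact id
        rw [mem_fInt] at this
        push_neg at this
        obtain ⟨S, hS, hyS⟩ := this
        rcases hy S hS with h | h
        · exact absurd h hyS
        · exact ⟨S, hS, h.symm⟩
    rw [hYeq]
    exact biInter_mem hN _ (fun S hS => hf2 S hS) hAne
  · intro y hy
    simp only [Finset.coe_image, Set.mem_image, Finset.mem_coe] at hy
    obtain ⟨S, hS, rfl⟩ := hy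
    have hsub : (↑(A.image f) : Set E) \ {f S} ⊆ S := by
      rintro z ⟨hz1, hz2⟩
      simp only [Finset.coe_image, Set.mem_image, Finset.mem_coe] at hz1
      obtain ⟨T, hT, rfl⟩ := hz1
      have hTS : T ≠ S := by
        intro hc
        exact hz2 (by rw [hc]; exact rfl)
      exact mem_fInt.1 (hf3 T hT) S (Finset.mem_erase.2 ⟨Ne.symm hTS, hS⟩)
    intro hmem
    exact hf1 S hS (cg_subset (hA hS) hsub hmem)
  · rw [Set.ncard_coe_finset, Finset.card_image_of_injOn hinj]

end CGaux
namespace CGaux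

variable {E : Type*} {N : Set (Set E)} [Fintype E]

attribute [local instance] Classical.propDecidable

set_option linter.unusedSectionVars false

lemma fInt_insert {G : Finset (Set E)} {M : Set E} : fInt (insert M G) = M ∩ fInt G := by
  ext x
  simp only [mem_fInt, Finset.mem_insert, Set.mem_inter_iff]
  constructor
  · exact fun hx => ⟨hx M (Or.inl rfl), fun S hS => hx S (Or.inr hS)⟩
  · rintro ⟨h1, h2⟩ S (rfl | hS)
    · exact h1
    · exact h2 S hS

lemma lemmaA (hN : IsConvexGeometry N) (n : ℕ) :
    ∀ A : Finset (Set E), (∑ S ∈ A, (Fintype.card E - S.ncard)) ≤ n →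
    ↑A ⊆ N → fInt A = ∅ → (∀ S ∈ A, (fInt (A.erase S)).Nonempty) → A.Nonempty →
    ∃ Y ∈ N, IsFree N Y ∧ Y.ncard = A.card := by
  induction n with
  | zero =>
    intro A hmeas hA hI herase hAne
    apply construct hN A hA hI herase hAne
    intro S hS M hM hSM hMI
    by_contra hMne
    have hss : S ⊂ M := ⟨hSM, fun hc => hMne (Set.Subset.antisymm hc hSM ▸ rfl)⟩
    have h1 : (Fintype.card E - S.ncard) ≥ 1 := by
      have h2 := Set.ncard_lt_ncard hss (Set.toFinite M)
      have h3 : M.ncard ≤ Fintype.card E := by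
        have := Set.ncard_le_ncard (Set.subset_univ M) (Set.toFinite _)
        simpa [Set.ncard_univ] using this
      omega
    have h4 : (Fintype.card E - S.ncard) ≤ ∑ T ∈ A, (Fintype.card E - T.ncard) :=
      Finset.single_le_sum (f := fun T => Fintype.card E - T.ncard) (fun T _ => Nat.zero_le _) hS
    omega
  | succ n ih =>
    intro A hmeas hA hI herase hAne
    by_cases hmax : ∀ S ∈ A, ∀ M ∈ N, S ⊆ M → M ∩ fInt (A.erase S) = ∅ → M = S
    · exact construct hN A hA hI herase hAne hmax
    · push_neg at hmax
      obtain ⟨S, hS, M, hM, hSM, hMI, hMne⟩ := hmax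
      have hss : S ⊂ M := ⟨hSM, fun hc => hMne (Set.Subset.antisymm hc hSM)⟩
      have hMA : M ∉ A := by
        intro hMA
        obtain ⟨t, ht⟩ := herase S hS
        have htM : t ∈ M := mem_fInt.1 ht M (Finset.mem_erase.2 ⟨hMne, hMA⟩)
        exact (Set.eq_empty_iff_forall_notMem.1 hMI t) ⟨htM, ht⟩
      have hMe : M ∉ A.erase S := fun hc => hMA (Finset.mem_of_mem_erase hc)
      set A' : Finset (Set E) := insert M (A.erase S) with hA'def
      have hcard : A'.card = A.card := by
        rw [hA'def, Finset.card_insert_of_notMem hMe, Finset.card_erase_of_mem hS]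
        have := Finset.card_pos.2 hAne
        omega
      have hA'N : ↑A' ⊆ N := by
        intro T hT
        simp only [hA'def, Finset.coe_insert, Set.mem_insert_iff, Finset.coe_erase,
          Set.mem_diff, Finset.mem_coe] at hT
        rcases hT with rfl | hT
        · exact hM
        · exact hA hT.1
      have hI' : fInt A' = ∅ := by
        rw [hA'def, fInt_insert]
        exact hMI
      have herase' : ∀ T ∈ A', (fInt (A'.erase T)).Nonempty := by
        intro T hT
        rcases Finset.mem_insert.1 hT with rfl | hT'
        · rw [hA'def, Finset.erase_insert hMe]
          exact herase S hS
        · have hTM : T ≠ M := by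
            intro hc
            exact hMe (hc ▸ hT')
          have hTA : T ∈ A := Finset.mem_of_mem_erase hT'
          have hTS : T ≠ S := (Finset.mem_erase.1 hT').1
          obtain ⟨t, ht⟩ := herase T hTA
          have htS : t ∈ S := mem_fInt.1 ht S (Finset.mem_erase.2 ⟨Ne.symm hTS, hS⟩)
          refine ⟨t, ?_⟩
          rw [mem_fInt]
          intro U hU
          have : U ∈ insert M ((A.erase S).erase T) := by
            rwa [hA'def, Finset.erase_insert_of_ne hTM.symm] at hU
          rcases Finset.mem_insert.1 this with rfl | hU'
          · exact hSM htS
          · have hU2 := Finset.mem_erase.1 hU'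
            exact mem_fInt.1 ht U
              (Finset.mem_erase.2 ⟨hU2.1, Finset.mem_of_mem_erase hU2.2⟩)
      have hmeas' : (∑ T ∈ A', (Fintype.card E - T.ncard)) ≤ n := by
        have e1 : ∑ T ∈ A', (Fintype.card E - T.ncard)
            = (Fintype.card E - M.ncard) + ∑ T ∈ A.erase S, (Fintype.card E - T.ncard) := by
          rw [hA'def, Finset.sum_insert hMe]
        have e2 : (Fintype.card E - S.ncard) + ∑ T ∈ A.erase S, (Fintype.card E - T.ncard)
            = ∑ T ∈ A, (Fintype.card E - T.ncard) := Finset.add_sum_erase A (fun T => Fintype.card E - T.ncard) hS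
        have hlt : S.ncard < M.ncard := Set.ncard_lt_ncard hss (Set.toFinite M)
        have hMle : M.ncard ≤ Fintype.card E := by
          have := Set.ncard_le_ncard (Set.subset_univ M) (Set.toFinite _)
          simpa [Set.ncard_univ] using this
        omega
      obtain ⟨Y, hY1, hY2, hY3⟩ := ih A' hmeas' hA'N hI' herase'
        ⟨M, Finset.mem_insert_self _ _⟩
      exact ⟨Y, hY1, hY2, by rw [hY3, hcard]⟩

end CGaux
namespace CGaux

variable {E : Type*} {N : Set (Set E)} [Fintype E]

attribute [local instance] Classical.propDecidable

set_option linter.unusedSectionVars false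

lemma helly (hN : IsConvexGeometry N) {h : ℕ}
    (hfree : ∀ X ∈ N, IsFree N X → X.ncard ≤ h) (hE : Nonempty E)
    (A : Finset (Set E)) (hA : ↑A ⊆ N) (hI : fInt A = ∅) :
    ∃ B ⊆ A, B.card ≤ h ∧ fInt B = ∅ := by
  classical
  set T := A.powerset.filter (fun B => fInt B = ∅) with hTdef
  have hTne : T.Nonempty := ⟨A, by simp [hTdef, Finset.mem_powerset, hI]⟩
  obtain ⟨B, hBT, hBmin⟩ := Finset.exists_min_image T Finset.card hTne
  have hB : B ⊆ A ∧ fInt B = ∅ := by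
    simpa [hTdef, Finset.mem_powerset] using hBT
  refine ⟨B, hB.1, ?_, hB.2⟩
  have hBne : B.Nonempty := by
    rcases B.eq_empty_or_nonempty with rfl | hne
    · exfalso
      obtain ⟨x⟩ := hE
      have : x ∈ fInt (∅ : Finset (Set E)) := mem_fInt.2 (by simp)
      rw [hB.2] at this
      exact this
    · exact hne
  have herase : ∀ S ∈ B, (fInt (B.erase S)).Nonempty := by
    intro S hS
    rw [Set.nonempty_iff_ne_empty]
    intro hc
    have hmem : B.erase S ∈ T := by
      simp only [hTdef, Finset.mem_filter, Finset.mem_powerset]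
      exact ⟨(Finset.erase_subset _ _).trans hB.1, hc⟩
    have h1 := hBmin _ hmem
    have h2 := Finset.card_erase_of_mem hS
    have h3 := Finset.card_pos.2 ⟨S, hS⟩
    omega
  obtain ⟨Y, hY1, hY2, hY3⟩ := lemmaA hN _ B le_rfl
    (fun x hx => hA (hB.1 hx)) hB.2 herase hBne
  rw [← hY3]
  exact hfree Y hY1 hY2

lemma helly' (hN : IsConvexGeometry N) {h : ℕ}
    (hfree : ∀ X ∈ N, IsFree N X → X.ncard ≤ h) (hE : Nonempty E)
    (A : Finset (Set E)) (hA : ↑A ⊆ N)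
    (hall : ∀ B ⊆ A, B.card ≤ h → (fInt B).Nonempty) : (fInt A).Nonempty := by
  rw [Set.nonempty_iff_ne_empty]
  intro hI
  obtain ⟨B, hBA, hBc, hBI⟩ := helly hN hfree hE A hA hI
  have := hall B hBA hBc
  rw [hBI] at this
  exact Set.not_nonempty_empty this

end CGaux
namespace CGaux

variable {E : Type*} {N : Set (Set E)} [Fintype E]

attribute [local instance] Classical.propDecidable

set_option linter.unusedSectionVars false

lemma lemmaD (hN : IsConvexGeometry N) {h : ℕ}
    (hfree : ∀ X ∈ N, IsFree N X → X.ncard ≤ h) (hE : Nonempty E)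
    (G : Finset (Set E)) (hG : ↑G ⊆ N) (hGne : (fInt G).Nonempty)
    (hGcard : h - 1 ≤ G.card) :
    ∃ G₂ ⊆ G, G₂.card = h - 1 ∧ (fInt G₂).Nonempty ∧ nu N (fInt G₂) = nu N (fInt G) := by
  classical
  set k := nu N (fInt G) with hk
  have hkpos : 0 < k := nu_pos hN hGne
  set C : Set E := chain N (k - 1) with hC
  have hCN : C ∈ N := chain_mem hN _
  have hdisj : fInt G ∩ C = ∅ := nu_empty_of_lt (by omega)
  have hCnotin : C ∉ G := by
    intro hc
    obtain ⟨x, hx⟩ := hGne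
    exact (Set.eq_empty_iff_forall_notMem.1 hdisj x) ⟨hx, mem_fInt.1 hx _ hc⟩
  have hIA : fInt (insert C G) = ∅ := by
    rw [fInt_insert, Set.inter_comm]
    exact hdisj
  obtain ⟨B, hBA, hBc, hBI⟩ := helly hN hfree hE (insert C G)
    (by
      intro T hT
      simp only [Finset.coe_insert, Set.mem_insert_iff, Finset.mem_coe] at hT
      rcases hT with rfl | hT
      · exact hCN
      · exact hG hT) hIA
  have hCB : C ∈ B := by
    by_contra hc
    have hBG : B ⊆ G := by
      intro x hx
      rcases Finset.mem_insert.1 (hBA hx) with rfl | hxG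
      · exact absurd hx hc
      · exact hxG
    obtain ⟨x, hx⟩ := hGne
    have : x ∈ fInt B := mem_fInt.2 fun S hS => mem_fInt.1 hx S (hBG hS)
    rw [hBI] at this
    exact this
  set G₂' := B.erase C with hG₂'
  have hG₂'G : G₂' ⊆ G := by
    intro x hx
    have h1 := Finset.mem_erase.1 hx
    rcases Finset.mem_insert.1 (hBA h1.2) with rfl | hxG
    · exact absurd rfl h1.1
    · exact hxG
  have hdisj2 : C ∩ fInt G₂' = ∅ := by
    rw [← fInt_erase hCB]
    exact hBI
  have hG₂'card : G₂'.card ≤ h - 1 := by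
    have h1 : G₂'.card = B.card - 1 := by
      rw [hG₂']
      exact Finset.card_erase_of_mem hCB
    have h2 : 0 < B.card := Finset.card_pos.2 ⟨C, hCB⟩
    omega
  obtain ⟨G₂, hsub1, hsub2, hcard2⟩ :=
    Finset.exists_subsuperset_card_eq hG₂'G hG₂'card hGcard
  have hG₂ne : (fInt G₂).Nonempty := hGne.mono (fInt_anti hsub2)
  refine ⟨G₂, hsub2, hcard2, hG₂ne, ?_⟩
  have hle : nu N (fInt G₂) ≤ k := nu_mono hN hGne (fInt_anti hsub2)
  have hge : k ≤ nu N (fInt G₂) := by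
    by_contra hc
    push_neg at hc
    have hspec := nu_spec hN hG₂ne
    have h1 : (fInt G₂ ∩ C).Nonempty := by
      refine hspec.mono (Set.inter_subset_inter_right _ ?_)
      exact chain_mono (by omega)
    obtain ⟨x, hx⟩ := h1
    exact (Set.eq_empty_iff_forall_notMem.1 hdisj2 x)
      ⟨hx.2, (fInt_anti hsub1) hx.1⟩
  omega

end CGaux
namespace CGaux

variable {E : Type*} {N : Set (Set E)} [Fintype E]

attribute [local instance] Classical.propDecidable

set_option linter.unusedSectionVars false
set_option maxHeartbeats 1000000

lemma mainHD (hN : IsConvexGeometry N) {h : ℕ}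
    (hfree : ∀ X ∈ N, IsFree N X → X.ncard ≤ h) (hE : Nonempty E) (hh : 2 ≤ h) :
    ∀ (k p q : ℕ), p - q = k → h ≤ q → q ≤ p → (h-2)*p < (h-1)*(q-1) →
    ∀ F : Finset (Set E), ↑F ⊆ N → (∀ S ∈ F, S.Nonempty) → p ≤ F.card →
    (∀ G ⊆ F, G.card = p → ∃ H ⊆ G, H.card = q ∧ (fInt H).Nonempty) →
    ∃ P : Finset E, P.card ≤ p - q + 1 ∧ ∀ S ∈ F, ∃ x ∈ P, x ∈ S := by
  intro k
  induction k with
  | zero =>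
    intro p q hk hq hpq hadm F hF hne hcard hP
    have hpq' : p = q := by omega
    subst hpq'
    have hint : (fInt F).Nonempty := by
      apply helly' hN hfree hE F hF
      intro B hBF hBh
      obtain ⟨G, hBG, hGF, hGcard⟩ :=
        Finset.exists_subsuperset_card_eq hBF (by omega : B.card ≤ p) hcard
      obtain ⟨H, hHG, hHcard, hHne⟩ := hP G hGF hGcard
      have hHG' : H = G := Finset.eq_of_subset_of_card_le hHG (by omega)
      subst hHG'
      exact hHne.mono (fInt_anti hBG)
    obtain ⟨x, hx⟩ := hint
    exact ⟨{x}, by simp, fun S hS => ⟨x, by simp, mem_fInt.1 hx S hS⟩⟩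
  | succ k ih =>
    intro p q hk hq hpq hadm F hF hne hcard hP
    have hplq : q < p := by omega
    obtain ⟨d, hdh⟩ : ∃ d, h = d + 1 := ⟨h - 1, by omega⟩
    subst hdh
    have hd1 : 1 ≤ d := by omega
    have hq1 : 1 ≤ q := by omega
    have hadm' : ((d : ℤ) - 1) * p < (d : ℤ) * ((q : ℤ) - 1) := by
      have hcopy := hadm
      have e1 : d + 1 - 2 = d - 1 := by omega
      have e2 : d + 1 - 1 = d := by omega
      rw [e1, e2] at hcopy
      zify [hd1, hq1] at hcopy
      exact hcopy
    -- q ≥ 2d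
    have h2d : 2 * d ≤ q := by
      rcases eq_or_lt_of_le hd1 with hd1' | hd1'
      · omega
      · by_contra hcon
        push_neg at hcon
        have h1 : ((d : ℤ) - 1) * ((q : ℤ) + 1) ≤ ((d : ℤ) - 1) * p := by
          apply mul_le_mul_of_nonneg_left _ (by omega)
          exact_mod_cast (by omega : (q : ℤ) + 1 ≤ (p : ℤ))
        have h2 : ((q : ℤ)) < 2 * d := by exact_mod_cast hcon
        nlinarith
    -- main inequality: d * (p - q) < p - d, i.e. p ≥ d*(p-q) + d + 1
    have hmain : d * (p - q) + d + 1 ≤ p := by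
      zify [le_of_lt hplq]
      nlinarith
    -- a d-subfamily with nonempty intersection exists
    have hdleq : d ≤ q := by omega
    have hcands_ne : ∃ G ⊆ F, G.card = d ∧ (fInt G).Nonempty := by
      obtain ⟨G₀, hG₀F, hG₀card⟩ := Finset.exists_subset_card_eq hcard
      obtain ⟨H₀, hH₀G, hH₀card, hH₀ne⟩ := hP G₀ hG₀F hG₀card
      obtain ⟨D₀, hD₀H, hD₀card⟩ := Finset.exists_subset_card_eq (s := H₀) (n := d) (by omega)
      exact ⟨D₀, (hD₀H.trans hH₀G).trans hG₀F, hD₀card,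
        hH₀ne.mono (fInt_anti hD₀H)⟩
    set cands := F.powerset.filter (fun G => G.card = d ∧ (fInt G).Nonempty) with hcandsdef
    have hcne : cands.Nonempty := by
      obtain ⟨G, h1, h2, h3⟩ := hcands_ne
      exact ⟨G, by simp [hcandsdef, Finset.mem_powerset, h1, h2, h3]⟩
    set vals := cands.image (fun G => nu N (fInt G)) with hvalsdef
    have hvne : vals.Nonempty := hcne.image _
    set K := vals.max' hvne with hKdef
    have hKmem : K ∈ vals := vals.max'_mem hvne
    obtain ⟨G₁, hG₁cands, hnuG₁⟩ := Finset.mem_image.1 hKmem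
    have hG₁F : G₁ ⊆ F := Finset.mem_powerset.1 (Finset.mem_filter.1 hG₁cands).1
    have hG₁card : G₁.card = d := (Finset.mem_filter.1 hG₁cands).2.1
    have hG₁ne : (fInt G₁).Nonempty := (Finset.mem_filter.1 hG₁cands).2.2
    have hKmax : ∀ G ⊆ F, G.card = d → (fInt G).Nonempty → nu N (fInt G) ≤ K := by
      intro G h1 h2 h3
      apply Finset.le_max'
      exact Finset.mem_image.2 ⟨G, by simp [hcandsdef, Finset.mem_powerset, h1, h2, h3], rfl⟩
    have hv0 := nu_spec hN hG₁ne
    set v := hv0.some with hvdef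
    have hv : v ∈ fInt G₁ ∩ chain N (nu N (fInt G₁)) := hv0.some_mem
    have hvG₁ : v ∈ fInt G₁ := hv.1
    -- the key sublemma
    have hX : ∀ H : Finset (Set E), H ⊆ F → (fInt H).Nonempty → G₁ ⊆ H →
        (∃ S₀ ∈ H, v ∉ S₀) → False := by
      intro H hHF hHne hG₁H hS₀
      obtain ⟨S₀, hS₀H, hS₀v⟩ := hS₀
      have hvH : v ∉ fInt H := fun hc => hS₀v (mem_fInt.1 hc S₀ hS₀H)
      have h3 : fInt H ∩ chain N K = ∅ := by
        rw [Set.eq_empty_iff_forall_notMem]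
        rintro x ⟨hx1, hx2⟩
        have hxG₁ : x ∈ fInt G₁ ∩ chain N (nu N (fInt G₁)) := by
          rw [hnuG₁]
          exact ⟨fInt_anti hG₁H hx1, hx2⟩
        have : x = v := nu_subsingleton hN hG₁ne hxG₁ hv
        exact hvH (this ▸ hx1)
      have h4 : K < nu N (fInt H) := by
        by_contra hc
        push_neg at hc
        have hspec := nu_spec hN hHne
        obtain ⟨x, hx⟩ := hspec
        exact (Set.eq_empty_iff_forall_notMem.1 h3 x)
          ⟨hx.1, chain_mono hc hx.2⟩
      obtain ⟨G₂, hG₂H, hG₂card, hG₂ne, hG₂nu⟩ :=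
        lemmaD hN hfree hE H (fun x hx => hF (hHF hx)) hHne
          (by
            have := Finset.card_le_card hG₁H
            omega)
      have : nu N (fInt G₂) ≤ K :=
        hKmax G₂ (hG₂H.trans hHF) (by omega) hG₂ne
      omega
    -- split on the size of F'
    set F' := F.filter (fun S => v ∉ S) with hF'def
    have hF'F : F' ⊆ F := Finset.filter_subset _ _
    have hvF : ∀ S ∈ F, S ∉ F' → v ∈ S := by
      intro S hS hSF'
      by_contra hc
      exact hSF' (Finset.mem_filter.2 ⟨hS, hc⟩)
    have hF'v : ∀ S ∈ F', v ∉ S := fun S hS => (Finset.mem_filter.1 hS).2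
    have hG₁F'disj : Disjoint G₁ F' := by
      rw [Finset.disjoint_left]
      intro S hSG₁ hSF'
      exact hF'v S hSF' (mem_fInt.1 hvG₁ S hSG₁)
    -- pick function
    set pickf : Set E → E := fun S => if hS : S.Nonempty then hS.some else hE.some
      with hpickdef
    have hpick : ∀ S ∈ F, pickf S ∈ S := by
      intro S hS
      have := hne S hS
      simp only [hpickdef, dif_pos this]
      exact this.some_mem
    by_cases hsmall : F'.card ≤ p - q
    · -- case a
      refine ⟨insert v (F'.image pickf), ?_, ?_⟩
      · calc (insert v (F'.image pickf)).card ≤ (F'.image pickf).card + 1 :=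
              Finset.card_insert_le _ _
          _ ≤ F'.card + 1 := by
              have := Finset.card_image_le (s := F') (f := pickf)
              omega
          _ ≤ p - q + 1 := by omega
      · intro S hS
        by_cases hSF' : S ∈ F'
        · exact ⟨pickf S, Finset.mem_insert.2 (Or.inr (Finset.mem_image_of_mem _ hSF')),
            hpick S hS⟩
        · exact ⟨v, Finset.mem_insert_self _ _, hvF S hS hSF'⟩
    · push_neg at hsmall
      by_cases hmed : F'.card ≤ p - d
      · -- case b
        have hfillsub : G₁ ⊆ F \ F' := by
          intro x hx
          exact Finset.mem_sdiff.2 ⟨hG₁F hx, Finset.disjoint_left.1 hG₁F'disj hx⟩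
        have hTcard : p - F'.card - d ≤ ((F \ F') \ G₁).card := by
          rw [Finset.card_sdiff_of_subset hfillsub, Finset.card_sdiff_of_subset hF'F]
          omega
        obtain ⟨fill, hfillT, hfillcard⟩ :=
          Finset.exists_subset_card_eq hTcard
        have hfillF : fill ⊆ F := fun x hx =>
          Finset.mem_sdiff.1 (Finset.mem_sdiff.1 (hfillT hx)).1 |>.1
        have hfillnF' : ∀ S ∈ fill, S ∉ F' := fun S hS =>
          (Finset.mem_sdiff.1 (Finset.mem_sdiff.1 (hfillT hS)).1).2
        have hfillnG₁ : Disjoint fill G₁ := by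
          rw [Finset.disjoint_left]
          exact fun S hS => (Finset.mem_sdiff.1 (hfillT hS)).2
        set Pp := F' ∪ G₁ ∪ fill with hPpdef
        have hPpF : Pp ⊆ F := by
          intro x hx
          rcases Finset.mem_union.1 hx with hx | hx
          · rcases Finset.mem_union.1 hx with hx | hx
            · exact hF'F hx
            · exact hG₁F hx
          · exact hfillF hx
        have hPpcard : Pp.card = p := by
          rw [hPpdef, Finset.card_union_of_disjoint, Finset.card_union_of_disjoint]
          · rw [hG₁card, hfillcard]
            omega
          · exact hG₁F'disj.symm
          · rw [Finset.disjoint_union_left]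
            constructor
            · rw [Finset.disjoint_left]
              exact fun S hS hS2 => hfillnF' S hS2 hS
            · exact hfillnG₁.symm
        obtain ⟨H, hHPp, hHcard, hHne'⟩ := hP Pp hPpF hPpcard
        have hHF : H ⊆ F := hHPp.trans hPpF
        -- all members of Pp outside F' contain v
        have hPpv : ∀ S ∈ Pp, S ∉ F' → v ∈ S := fun S hS => hvF S (hPpF hS)
        -- ¬ G₁ ⊆ H
        have hnotG₁ : ¬ G₁ ⊆ H := by
          intro hGH
          -- find a member of H in F'
          have hcard1 : (H \ F').card ≤ p - F'.card := by
            have hsub : H \ F' ⊆ G₁ ∪ fill := by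
              intro x hx
              have hx1 := Finset.mem_sdiff.1 hx
              rcases Finset.mem_union.1 (hHPp hx1.1) with hx2 | hx2
              · rcases Finset.mem_union.1 hx2 with hx3 | hx3
                · exact absurd hx3 hx1.2
                · exact Finset.mem_union_left _ hx3
              · exact Finset.mem_union_right _ hx2
            calc (H \ F').card ≤ (G₁ ∪ fill).card := Finset.card_le_card hsub
              _ ≤ d + (p - F'.card - d) := by
                  have := Finset.card_union_le G₁ fill
                  omega
              _ ≤ p - F'.card := by omega
          have hcard2 : 0 < (H ∩ F').card := by
            have := Finset.card_inter_add_card_sdiff H F'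
            omega
          obtain ⟨S₀, hS₀⟩ := Finset.card_pos.1 hcard2
          have hS₀H := Finset.mem_inter.1 hS₀
          exact hX H hHF hHne' hGH ⟨S₀, hS₀H.1, hF'v S₀ hS₀H.2⟩
        obtain ⟨g, hgG₁, hgH⟩ := Finset.not_subset.1 hnotG₁
        have hHG₁card : (H ∩ G₁).card ≤ d - 1 := by
          have hsub : H ∩ G₁ ⊆ G₁.erase g := by
            intro x hx
            have hx1 := Finset.mem_inter.1 hx
            exact Finset.mem_erase.2 ⟨fun hc => hgH (hc ▸ hx1.1), hx1.2⟩
          calc (H ∩ G₁).card ≤ (G₁.erase g).card := Finset.card_le_card hsub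
            _ = d - 1 := by rw [Finset.card_erase_of_mem hgG₁, hG₁card]
        have hHF'card : q + F'.card + 1 - p ≤ (H ∩ F').card := by
          have hsub : H \ F' ⊆ (H ∩ G₁) ∪ fill := by
            intro x hx
            have hx1 := Finset.mem_sdiff.1 hx
            rcases Finset.mem_union.1 (hHPp hx1.1) with hx2 | hx2
            · rcases Finset.mem_union.1 hx2 with hx3 | hx3
              · exact absurd hx3 hx1.2
              · exact Finset.mem_union_left _ (Finset.mem_inter.2 ⟨hx1.1, hx3⟩)
            · exact Finset.mem_union_right _ hx2
          have h1 : (H \ F').card ≤ (d - 1) + (p - F'.card - d) := by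
            calc (H \ F').card ≤ ((H ∩ G₁) ∪ fill).card := Finset.card_le_card hsub
              _ ≤ (H ∩ G₁).card + fill.card := Finset.card_union_le _ _
              _ ≤ (d - 1) + (p - F'.card - d) := by omega
          have h2 := Finset.card_inter_add_card_sdiff H F'
          omega
        obtain ⟨w, hw⟩ := hHne'
        have hRcard : (F' \ H).card ≤ p - q - 1 := by
          have h1 := Finset.card_inter_add_card_sdiff F' H
          have h2 : (F' ∩ H).card = (H ∩ F').card := by rw [Finset.inter_comm]
          omega
        refine ⟨insert v (insert w ((F' \ H).image pickf)), ?_, ?_⟩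
        · calc (insert v (insert w ((F' \ H).image pickf))).card
              ≤ (insert w ((F' \ H).image pickf)).card + 1 := Finset.card_insert_le _ _
            _ ≤ ((F' \ H).image pickf).card + 2 := by
                have := Finset.card_insert_le w ((F' \ H).image pickf)
                omega
            _ ≤ (F' \ H).card + 2 := by
                have := Finset.card_image_le (s := F' \ H) (f := pickf)
                omega
            _ ≤ p - q + 1 := by omega
        · intro S hS
          by_cases hSF' : S ∈ F'
          · by_cases hSH : S ∈ H
            · exact ⟨w, by simp, mem_fInt.1 hw S hSH⟩
            · refine ⟨pickf S, ?_, hpick S hS⟩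
              have : S ∈ F' \ H := Finset.mem_sdiff.2 ⟨hSF', hSH⟩
              simp only [Finset.mem_insert]
              exact Or.inr (Or.inr (Finset.mem_image_of_mem _ this))
          · exact ⟨v, by simp, hvF S hS hSF'⟩
      · -- case c : recurse
        push_neg at hmed
        have hprop : ∀ G' ⊆ F', G'.card = p - d →
            ∃ H' ⊆ G', H'.card = (q - d + 1) ∧ (fInt H').Nonempty := by
          intro G' hG'F' hG'card
          have hdisj : Disjoint G' G₁ := by
            rw [Finset.disjoint_left]
            intro S hSG' hSG₁
            exact hF'v S (hG'F' hSG') (mem_fInt.1 hvG₁ S hSG₁)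
          set Pp := G' ∪ G₁ with hPpdef
          have hPpF : Pp ⊆ F := Finset.union_subset (hG'F'.trans hF'F) hG₁F
          have hPpcard : Pp.card = p := by
            rw [hPpdef, Finset.card_union_of_disjoint hdisj, hG'card, hG₁card]
            omega
          obtain ⟨H, hHPp, hHcard, hHne'⟩ := hP Pp hPpF hPpcard
          have hnotG₁ : ¬ G₁ ⊆ H := by
            intro hGH
            have hcard1 : (H \ G').card ≤ d := by
              have hsub : H \ G' ⊆ G₁ := by
                intro x hx
                have hx1 := Finset.mem_sdiff.1 hx
                rcases Finset.mem_union.1 (hHPp hx1.1) with hx2 | hx2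
                · exact absurd hx2 hx1.2
                · exact hx2
              calc (H \ G').card ≤ G₁.card := Finset.card_le_card hsub
                _ = d := hG₁card
            have hcard2 : 0 < (H ∩ G').card := by
              have := Finset.card_inter_add_card_sdiff H G'
              omega
            obtain ⟨S₀, hS₀⟩ := Finset.card_pos.1 hcard2
            have hS₀H := Finset.mem_inter.1 hS₀
            exact hX H (hHPp.trans hPpF) hHne' hGH
              ⟨S₀, hS₀H.1, hF'v S₀ (hG'F' hS₀H.2)⟩
          obtain ⟨g, hgG₁, hgH⟩ := Finset.not_subset.1 hnotG₁
          have hcard3 : (H \ G').card ≤ d - 1 := by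
            have hsub : H \ G' ⊆ G₁.erase g := by
              intro x hx
              have hx1 := Finset.mem_sdiff.1 hx
              rcases Finset.mem_union.1 (hHPp hx1.1) with hx2 | hx2
              · exact absurd hx2 hx1.2
              · exact Finset.mem_erase.2 ⟨fun hc => hgH (hc ▸ hx1.1), hx2⟩
            calc (H \ G').card ≤ (G₁.erase g).card := Finset.card_le_card hsub
              _ = d - 1 := by rw [Finset.card_erase_of_mem hgG₁, hG₁card]
          have hcard4 : q - d + 1 ≤ (H ∩ G').card := by
            have := Finset.card_inter_add_card_sdiff H G'
            omega
          obtain ⟨H', hH'sub, hH'card⟩ :=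
            Finset.exists_subset_card_eq hcard4
          refine ⟨H', hH'sub.trans (Finset.inter_subset_right), hH'card, ?_⟩
          exact hHne'.mono (fInt_anti (hH'sub.trans (Finset.inter_subset_left)))
        have hadm'' : (d+1-2)*(p-d) < (d+1-1)*((q-d+1)-1) := by
          have e1 : d + 1 - 2 = d - 1 := by omega
          have e2 : d + 1 - 1 = d := by omega
          have e3 : (q - d + 1) - 1 = q - d := by omega
          rw [e1, e2, e3]
          zify [show d ≤ p by omega, show d ≤ q by omega, hd1]
          nlinarith
        obtain ⟨P'', hP''card, hP''cov⟩ := ih (p - d) (q - d + 1)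
          (by omega) (by omega) (by omega) hadm''
          F' (fun x hx => hF (hF'F hx)) (fun S hS => hne S (hF'F hS))
          (by omega) hprop
        refine ⟨insert v P'', ?_, ?_⟩
        · have h1 := Finset.card_insert_le v P''
          have h2 : (p - d) - (q - d + 1) + 1 = p - q := by omega
          omega
        · intro S hS
          by_cases hSF' : S ∈ F'
          · obtain ⟨x, hx1, hx2⟩ := hP''cov S hSF'
            exact ⟨x, Finset.mem_insert.2 (Or.inr hx1), hx2⟩
          · exact ⟨v, Finset.mem_insert_self _ _, hvF S hS hSF'⟩

end CGaux
theorem stmt_14 {E : Type*} [Fintype E] (N : Set (Set E))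
    (hN : IsConvexGeometry N) (h p q : ℕ)
    (hmaxfree : (∃ X ∈ N, IsFree N X ∧ X.ncard = h) ∧
      ∀ X ∈ N, IsFree N X → X.ncard ≤ h)
    (hq : h ≤ q) (hpq : q ≤ p)
    (hadm : (h - 2) * p < (h - 1) * (q - 1))
    (F : Finset (Set E)) (hFN : ↑F ⊆ N) (hne : ∀ S ∈ F, S.Nonempty)
    (hcard : p ≤ F.card)
    (hP : ∀ G ⊆ F, G.card = p → ∃ H ⊆ G, H.card = q ∧ (⋂ S ∈ H, S).Nonempty) :
    ∃ P : Finset E, P.card ≤ p - q + 1 ∧ ∀ S ∈ F, ∃ x ∈ P, x ∈ S := by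
  classical
  rcases Nat.lt_or_ge h 2 with hh | hh
  · exfalso
    interval_cases h <;> simp at hadm
  · obtain ⟨X, hXN, hXfree, hXcard⟩ := hmaxfree.1
    have hE : Nonempty E := by
      have hXne : X.Nonempty := Set.nonempty_of_ncard_ne_zero (by omega)
      exact ⟨hXne.some⟩
    exact CGaux.mainHD hN hmaxfree.2 hE hh (p - q) p q rfl hq hpq hadm
      F hFN hne hcard hP
end

section
/- Let $T$ be a finite tree and let $p \geq q \geq 2$ be integers (note every pair $(p,q)$ with $p \geq q \geq 2$ satisfies $0 \cdot p < 1 \cdot (q-1)$). If $\mathcal{F}$ is a finite family of at least $p$ nonempty subtrees of $T$ with the $(p,q)$-property, then $\mathcal{F}$ can be stabbed by $p-q+1$ vertices of $T$. -/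
open SimpleGraph

namespace StabTreeAux

variable {V : Type*} {G : SimpleGraph V}

lemma isPath_append' {a b c : V} {p : G.Walk a b} {q : G.Walk b c}
    (hp : p.IsPath) (hq : q.IsPath)
    (h : ∀ x ∈ p.support, x ∈ q.support → x = b) : (p.append q).IsPath := by
  rw [Walk.isPath_def, Walk.support_append]
  have hqtail : b ∉ q.support.tail := by
    have := hq.support_nodup
    rw [q.support_eq_cons] at this
    exact (List.nodup_cons.1 this).1
  refine List.Nodup.append hp.support_nodup (hq.support_nodup.tail) ?_
  intro x hxp hxq
  have hxb : x = b := h x hxp (List.mem_of_mem_tail hxq)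
  subst hxb
  exact hqtail hxq

lemma length_eq_dist (hG : G.IsTree) {a b : V} {p : G.Walk a b} (hp : p.IsPath) :
    p.length = G.dist a b := by
  obtain ⟨w, hw, hwl⟩ := hG.isConnected.exists_path_of_dist a b
  have := hG.IsAcyclic.path_unique ⟨p, hp⟩ ⟨w, hw⟩
  rw [show p = w from congrArg Subtype.val this]
  exact hwl

lemma exists_path_subset {S : Set V} (hc : (G.induce S).Connected) {a b : V}
    (ha : a ∈ S) (hb : b ∈ S) :
    ∃ p : G.Walk a b, p.IsPath ∧ ∀ x ∈ p.support, x ∈ S := by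
  classical
  obtain ⟨w⟩ := hc.preconnected ⟨a, ha⟩ ⟨b, hb⟩
  let f : G.induce S →g G := ⟨Subtype.val, fun {x y} h => h⟩
  refine ⟨(w.map f).bypass, Walk.bypass_isPath _, ?_⟩
  intro x hx
  have hx' := (w.map f).support_bypass_subset hx
  rw [Walk.support_map] at hx'
  obtain ⟨y, _, rfl⟩ := List.mem_map.1 hx'
  exact y.2

lemma exists_first (A : Set V) {r u : V} (P : G.Walk r u) (hu : u ∈ A) :
    ∃ y, y ∈ A ∧ ∃ (P1 : G.Walk r y) (P2 : G.Walk y u), P1.append P2 = P ∧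
      ∀ z ∈ P1.support, z ∈ A → z = y := by
  classical
  revert hu
  induction P with
  | nil =>
    intro hu
    exact ⟨_, hu, Walk.nil, Walk.nil, rfl, by intro z hz _; simpa using hz⟩
  | @cons a b c h W ih =>
    intro hu
    by_cases hr : a ∈ A
    · exact ⟨a, hr, Walk.nil, Walk.cons h W, rfl, by intro z hz _; simpa using hz⟩
    · obtain ⟨y, hy, P1, P2, heq, hfirst⟩ := ih hu
      refine ⟨y, hy, Walk.cons h P1, P2, by rw [Walk.cons_append, heq], ?_⟩
      intro z hz hzA
      rw [Walk.support_cons] at hz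
      rcases List.mem_cons.1 hz with rfl | hz'
      · exact absurd hzA hr
      · exact hfirst z hz' hzA

lemma gate (hG : G.IsTree) (r : V) {S : Set V} (hc : (G.induce S).Connected)
    {w u : V} (hw : w ∈ S) (hmin : ∀ x ∈ S, G.dist r w ≤ G.dist r x) (hu : u ∈ S) :
    ∃ (P1 : G.Walk r w) (P2 : G.Walk w u), (P1.append P2).IsPath ∧
      ∀ x ∈ P2.support, x ∈ S := by
  classical
  obtain ⟨Q, hQp, hQS⟩ := exists_path_subset hc hw hu
  obtain ⟨P, hPp, -⟩ := hG.isConnected.exists_path_of_dist r u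
  obtain ⟨y, hyQ, P1, P2, hPeq, hfirst⟩ :=
    exists_first {x | x ∈ Q.support} P (Q.end_mem_support)
  have hyQ' : y ∈ Q.support := hyQ
  have hP1p : P1.IsPath := by rw [← hPeq] at hPp; exact hPp.of_append_left
  have hP2p : P2.IsPath := by rw [← hPeq] at hPp; exact hPp.of_append_right
  have hQ1p : (Q.takeUntil y hyQ').IsPath := hQp.takeUntil hyQ'
  have hD : (P1.append (Q.takeUntil y hyQ').reverse).IsPath := by
    refine isPath_append' hP1p hQ1p.reverse ?_
    intro x hxP hxQ
    refine hfirst x hxP ?_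
    rw [Walk.support_reverse] at hxQ
    exact Q.support_takeUntil_subset hyQ' (List.mem_reverse.1 hxQ)
  have hlD := length_eq_dist hG hD
  rw [Walk.length_append, Walk.length_reverse, length_eq_dist hG hP1p,
    length_eq_dist hG hQ1p] at hlD
  -- hlD : dist r y + dist w y = dist r w
  have hyS : y ∈ S := hQS y hyQ'
  have hle : G.dist r w ≤ G.dist r y := hmin y hyS
  have hwy : G.dist w y = 0 := by omega
  have hweq : w = y := (hG.isConnected.preconnected w y).dist_eq_zero_iff.mp hwy
  subst hweq
  have hQ2p : (Q.dropUntil w hyQ').IsPath := hQp.dropUntil hyQ'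
  have huniq : P2 = Q.dropUntil w hyQ' :=
    congrArg Subtype.val (hG.IsAcyclic.path_unique ⟨P2, hP2p⟩ ⟨Q.dropUntil w hyQ', hQ2p⟩)
  refine ⟨P1, P2, by rw [hPeq]; exact hPp, ?_⟩
  intro x hx
  rw [huniq] at hx
  exact hQS x (Q.support_dropUntil_subset hyQ' hx)

lemma key (hG : G.IsTree) (r : V) {S S0 : Set V}
    (hcS : (G.induce S).Connected) (hcS0 : (G.induce S0).Connected)
    {v0 w u : V} (hv0 : v0 ∈ S0) (hminS0 : ∀ x ∈ S0, G.dist r v0 ≤ G.dist r x)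
    (hw : w ∈ S) (hminS : ∀ x ∈ S, G.dist r w ≤ G.dist r x)
    (hwv : G.dist r w ≤ G.dist r v0) (huS : u ∈ S) (huS0 : u ∈ S0) : v0 ∈ S := by
  classical
  obtain ⟨A1, A2, hA, -⟩ := gate hG r hcS0 hv0 hminS0 huS0
  obtain ⟨B1, B2, hB, hB2S⟩ := gate hG r hcS hw hminS huS
  have heq : A1.append A2 = B1.append B2 :=
    congrArg Subtype.val (hG.IsAcyclic.path_unique ⟨A1.append A2, hA⟩ ⟨B1.append B2, hB⟩)
  have hv0mem : v0 ∈ (B1.append B2).support := by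
    rw [← heq, Walk.mem_support_append_iff]
    exact Or.inl A1.end_mem_support
  rw [Walk.mem_support_append_iff] at hv0mem
  rcases hv0mem with h1 | h2
  · have hB1p : B1.IsPath := hB.of_append_left
    have hadd : G.dist r v0 + G.dist v0 w = G.dist r w := by
      have h1' := length_eq_dist hG (hB1p.takeUntil h1)
      have h2' := length_eq_dist hG (hB1p.dropUntil h1)
      have h3' := congrArg Walk.length (B1.take_spec h1)
      rw [Walk.length_append] at h3'
      rw [length_eq_dist hG hB1p] at h3'
      omega
    have hz : G.dist v0 w = 0 := by omega
    have : v0 = w := (hG.isConnected.preconnected v0 w).dist_eq_zero_iff.mp hz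
    rw [this]; exact hw
  · exact hB2S v0 h2

lemma exists_min_pt (f : V → ℕ) {S : Set V} (hS : S.Nonempty) :
    ∃ w ∈ S, f w = sInf (f '' S) ∧ ∀ x ∈ S, f w ≤ f x := by
  have h1 := Nat.sInf_mem (hS.image f)
  obtain ⟨w, hw, hfw⟩ := h1
  exact ⟨w, hw, hfw, fun x hx => hfw ▸ Nat.sInf_le ⟨x, hx, rfl⟩⟩

lemma aux [Fintype V] (hG : G.IsTree) (r : V) :
    ∀ (n : ℕ) (F : Finset (Set V)), F.card ≤ n →
    (∀ S ∈ F, S.Nonempty ∧ (G.induce S).Connected) →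
    ∀ (k : ℕ), (∀ D ⊆ F, (∀ A ∈ D, ∀ B ∈ D, A ≠ B → A ∩ B = ∅) → D.card ≤ k) →
    ∃ P : Finset V, P.card ≤ k ∧ ∀ S ∈ F, ∃ x ∈ P, x ∈ S := by
  intro n
  induction n with
  | zero =>
    intro F hFc _ k _
    rw [Nat.le_zero, Finset.card_eq_zero] at hFc
    subst hFc
    exact ⟨∅, by simp⟩
  | succ n ih =>
    intro F hFc hF k hpack
    classical
    rcases F.eq_empty_or_nonempty with rfl | hFne
    · exact ⟨∅, by simp⟩
    set m : Set V → ℕ := fun S => sInf (G.dist r '' S) with hm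
    obtain ⟨S0, hS0F, hS0max⟩ := F.exists_max_image m hFne
    obtain ⟨v0, hv0S0, hv0d, hminS0⟩ := exists_min_pt (G.dist r) (hF S0 hS0F).1
    set F' := F.filter (fun S => v0 ∉ S) with hF'
    have hF'ss : F' ⊆ F := Finset.filter_subset _ _
    have hS0notF' : S0 ∉ F' := by
      intro hmem
      exact (Finset.mem_filter.1 hmem).2 hv0S0
    have hF'c : F'.card ≤ n := by
      have : F' ⊂ F := Finset.ssubset_iff_of_subset hF'ss |>.2 ⟨S0, hS0F, hS0notF'⟩
      have := Finset.card_lt_card this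
      omega
    have hk1 : 1 ≤ k := by
      have := hpack {S0} (by simpa using hS0F) (by intro A hA B hB hne; simp at hA hB; subst hA; subst hB; exact absurd rfl hne)
      simpa using this
    have hdisj : ∀ S ∈ F', S ∩ S0 = ∅ := by
      intro S hS
      by_contra hne
      obtain ⟨u, huS, huS0⟩ := Set.nonempty_iff_ne_empty.2 hne
      obtain ⟨w, hwS, hwd, hminS⟩ := exists_min_pt (G.dist r) (hF S (hF'ss hS)).1
      have hwv : G.dist r w ≤ G.dist r v0 := by
        rw [hwd, hv0d]
        exact hS0max S (hF'ss hS)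
      have hv0S : v0 ∈ S :=
        key hG r (hF S (hF'ss hS)).2 (hF S0 hS0F).2 hv0S0 hminS0 hwS hminS hwv huS huS0
      exact (Finset.mem_filter.1 hS).2 hv0S
    have hpack' : ∀ D ⊆ F', (∀ A ∈ D, ∀ B ∈ D, A ≠ B → A ∩ B = ∅) → D.card ≤ k - 1 := by
      intro D hD hDp
      have hS0D : S0 ∉ D := fun hmem => hS0notF' (hD hmem)
      have hins : insert S0 D ⊆ F := by
        intro A hA
        rcases Finset.mem_insert.1 hA with rfl | hA'
        · exact hS0F
        · exact hF'ss (hD hA')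
      have hinsp : ∀ A ∈ insert S0 D, ∀ B ∈ insert S0 D, A ≠ B → A ∩ B = ∅ := by
        intro A hA B hB hne
        rcases Finset.mem_insert.1 hA with rfl | hA' <;>
          rcases Finset.mem_insert.1 hB with rfl | hB'
        · exact absurd rfl hne
        · rw [Set.inter_comm]; exact hdisj B (hD hB')
        · exact hdisj A (hD hA')
        · exact hDp A hA' B hB' hne
      have := hpack (insert S0 D) hins hinsp
      rw [Finset.card_insert_of_notMem hS0D] at this
      omega
    obtain ⟨P', hP'c, hP'stab⟩ := ih F' hF'c (fun S hS => hF S (hF'ss hS)) (k - 1) hpack'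
    refine ⟨insert v0 P', ?_, ?_⟩
    · have := Finset.card_insert_le v0 P'
      omega
    · intro S hS
      by_cases hv : v0 ∈ S
      · exact ⟨v0, Finset.mem_insert_self _ _, hv⟩
      · obtain ⟨x, hxP, hxS⟩ := hP'stab S (Finset.mem_filter.2 ⟨hS, hv⟩)
        exact ⟨x, Finset.mem_insert_of_mem hxP, hxS⟩

end StabTreeAux

theorem stmt_16 {V : Type*} [Fintype V] (G : SimpleGraph V) (hG : G.IsTree)
    (p q : ℕ) (hq : 2 ≤ q) (hpq : q ≤ p)
    (F : Finset (Set V))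
    (hF : ∀ S ∈ F, S.Nonempty ∧ (G.induce S).Connected)
    (hcard : p ≤ F.card)
    (hP : ∀ G' ⊆ F, G'.card = p → ∃ H ⊆ G', H.card = q ∧ (⋂ S ∈ H, S).Nonempty) :
    ∃ P : Finset V, P.card ≤ p - q + 1 ∧ ∀ S ∈ F, ∃ x ∈ P, x ∈ S := by
  classical
  have hFne : F.Nonempty := Finset.card_pos.1 (by omega)
  obtain ⟨S₁, hS₁⟩ := hFne
  obtain ⟨r, -⟩ := (hF S₁ hS₁).1
  have hpack : ∀ D ⊆ F, (∀ A ∈ D, ∀ B ∈ D, A ≠ B → A ∩ B = ∅) → D.card ≤ p - q + 1 := by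
    intro D hD hDp
    by_contra hcon
    push_neg at hcon
    have hcon' : p - q + 2 ≤ D.card := hcon
    obtain ⟨D', hD'D, hD'c⟩ := Finset.exists_subset_card_eq hcon'
    have hD'F : D' ⊆ F := hD'D.trans hD
    obtain ⟨G', hDG', hG'F, hG'c⟩ :=
      Finset.exists_subsuperset_card_eq (n := q - 2 + D'.card) hD'F le_add_self (by rw [hD'c]; omega)
    rw [hD'c] at hG'c
    have hG'p : G'.card = p := by rw [hG'c]; omega
    obtain ⟨H, hHG', hHq, x, hx⟩ := hP G' hG'F hG'p
    have hsd : (H \ D').card ≤ q - 2 := by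
      have h1 : H \ D' ⊆ G' \ D' := Finset.sdiff_subset_sdiff hHG' (le_refl _)
      have h2 := Finset.card_le_card h1
      have h3 : (G' \ D').card = G'.card - D'.card := Finset.card_sdiff_of_subset hDG'
      rw [h3, hG'c, hD'c] at h2
      omega
    have hint : 2 ≤ (H ∩ D').card := by
      have := Finset.card_inter_add_card_sdiff H D'
      omega
    obtain ⟨A, hA, B, hB, hAB⟩ := Finset.one_lt_card.1 (by omega : 1 < (H ∩ D').card)
    have hAD : A ∈ D := hD'D (Finset.mem_inter.1 hA).2
    have hBD : B ∈ D := hD'D (Finset.mem_inter.1 hB).2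
    have hxA : x ∈ A := by
      have := Set.mem_iInter₂.1 hx
      exact this A (Finset.mem_inter.1 hA).1
    have hxB : x ∈ B := by
      have := Set.mem_iInter₂.1 hx
      exact this B (Finset.mem_inter.1 hB).1
    have := hDp A hAD B hBD hAB
    rw [Set.eq_empty_iff_forall_notMem] at this
    exact this x ⟨hxA, hxB⟩
  exact StabTreeAux.aux hG r F.card F (le_refl _) hF (p - q + 1) hpack
end

section
/- Let $(E, \leq)$ be a finite partially ordered set and let $w$ be the maximum size of an antichain in $E$. Let $\mathcal{F}$ be a finite family of nonempty lower sets (ideals) of $E$ such that every $w$ members of $\mathcal{F}$ have a common element. Then all members of $\mathcal{F}$ have a common element. -/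
theorem stmt_17 {E : Type*} [Fintype E] [PartialOrder E] (w : ℕ)
    (hwid : (∀ A : Finset E, IsAntichain (· ≤ ·) (↑A : Set E) → A.card ≤ w) ∧
      ∃ A : Finset E, IsAntichain (· ≤ ·) (↑A : Set E) ∧ A.card = w)
    (F : Finset (Set E)) (hF : ∀ S ∈ F, S.Nonempty ∧ IsLowerSet S)
    (hP : ∀ G ⊆ F, G.card ≤ w → (⋂ S ∈ G, S).Nonempty) :
    (⋂ S ∈ F, S).Nonempty := by
  by_contra hempty
  rw [Set.not_nonempty_iff_eq_empty] at hempty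
  have hex : ∃ n, ∃ G : Finset (Set E), G ⊆ F ∧ G.card = n ∧ (⋂ S ∈ G, S) = ∅ :=
    ⟨F.card, F, le_refl _, rfl, hempty⟩
  classical
  set n := Nat.find hex with hn
  obtain ⟨G, hGF, hGcard, hGempty⟩ := Nat.find_spec hex
  have hmin : ∀ m < n, ∀ G' : Finset (Set E), G' ⊆ F → G'.card = m →
      (⋂ S ∈ G', S).Nonempty := by
    intro m hm G' hsub hcard
    by_contra h
    rw [Set.not_nonempty_iff_eq_empty] at h
    exact Nat.find_min hex hm ⟨G', hsub, hcard, h⟩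
  have hwn : w < n := by
    by_contra h
    push_neg at h
    have := hP G hGF (hGcard ▸ h)
    rw [hGempty] at this
    exact this.ne_empty rfl
  have hnpos : 0 < n := lt_of_le_of_lt (Nat.zero_le w) hwn
  -- choose witnesses
  have hchoice : ∀ S : {S // S ∈ G}, ∃ x : E, ∀ T ∈ G.erase S.1, x ∈ T := by
    rintro ⟨S, hS⟩
    have hsub : G.erase S ⊆ F := (Finset.erase_subset _ _).trans hGF
    have hcard : (G.erase S).card = n - 1 := by rw [Finset.card_erase_of_mem hS, hGcard]
    have hlt : n - 1 < n := Nat.sub_lt hnpos one_pos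
    obtain ⟨x, hx⟩ := hmin _ hlt _ hsub hcard
    exact ⟨x, fun T hT => Set.mem_iInter₂.mp hx T hT⟩
  choose f hf using hchoice
  have hfmem : ∀ (S : {S // S ∈ G}) (T : Set E), T ∈ G → T ≠ S.1 → f S ∈ T := by
    intro S T hT hne
    exact hf S T (Finset.mem_erase.mpr ⟨hne, hT⟩)
  have hfnot : ∀ S : {S // S ∈ G}, f S ∉ S.1 := by
    intro S hmem
    have : f S ∈ ⋂ T ∈ G, T := by
      apply Set.mem_iInter₂.mpr
      intro T hT
      by_cases h : T = S.1
      · rw [h]; exact hmem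
      · exact hfmem S T hT h
    rw [hGempty] at this
    exact this
  have hinj : Function.Injective f := by
    intro S T h
    by_contra hne
    have hne' : S.1 ≠ T.1 := fun he => hne (Subtype.ext he)
    have : f T ∈ S.1 := hfmem T S.1 S.2 hne'
    rw [← h] at this
    exact hfnot S this
  set A : Finset E := G.attach.image f with hA
  have hAcard : A.card = n := by
    rw [hA, Finset.card_image_of_injective _ hinj, Finset.card_attach, hGcard]
  have hanti : IsAntichain (· ≤ ·) (↑A : Set E) := by
    intro x hx y hy hxy hle
    simp only [hA, Finset.coe_image, Set.mem_image, Finset.mem_coe, Finset.mem_attach,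
      true_and] at hx hy
    obtain ⟨S, -, rfl⟩ := hx
    obtain ⟨T, -, rfl⟩ := hy
    have hne : S ≠ T := fun h => hxy (by rw [h])
    have hne' : S.1 ≠ T.1 := fun he => hne (Subtype.ext he)
    have hT : f T ∈ S.1 := hfmem T S.1 S.2 hne'
    have : f S ∈ S.1 := (hF S.1 (hGF S.2)).2 hle hT
    exact hfnot S this
  have := hwid.1 A hanti
  rw [hAcard] at this
  exact absurd this (not_le.mpr hwn)
end

section
/- Let $(E, \leq)$ be a finite poset of width $w \geq 2$, and let $p \geq q \geq w$ be integers with $(w-2)p < (w-1)(q-1)$. If $\mathcal{F}$ is a finite family of nonempty lower sets of $E$ with the $(p,q)$-property, then there exist $p-q+1$ elements of $E$ stabbing $\mathcal{F}$. -/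
open Finset

open scoped Classical

section PqPoset

variable {E : Type*} [Fintype E] [PartialOrder E]

/-- double counting -/
private lemma sum_card_filter_comm {α β : Type*} (A : Finset α) (B : Finset β)
    (r : α → β → Prop) [∀ a b, Decidable (r a b)] :
    ∑ a ∈ A, (B.filter (fun b => r a b)).card = ∑ b ∈ B, (A.filter (fun a => r a b)).card := by
  simp_rw [Finset.card_filter]
  exact Finset.sum_comm

private noncomputable def minset (E : Type*) [Fintype E] [PartialOrder E] : Finset E :=
  Finset.univ.filter (fun m => ∀ x : E, x ≤ m → x = m)

private lemma mem_minset {m : E} : m ∈ minset E ↔ ∀ x : E, x ≤ m → x = m := by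
  simp [minset]

private lemma exists_minset_le (x : E) : ∃ m ∈ minset E, m ≤ x := by
  obtain ⟨b, hbx, hb⟩ := exists_minimal_le_of_wellFoundedLT (fun _ : E => True) x trivial
  exact ⟨b, mem_minset.2 (fun y hy => le_antisymm hy (hb.2 trivial hy)), hbx⟩

private lemma card_hits_avoids (m : E) (F : Finset (Set E)) :
    (F.filter (fun S => m ∈ S)).card + (F.filter (fun S => m ∉ S)).card = F.card :=
  Finset.card_filter_add_card_filter_not _

/-- The core combinatorial covering lemma. -/
private lemma core (w p q : ℕ) (hw2 : 2 ≤ w) (hq : w ≤ q) (hpq : q ≤ p)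
    (hk : (minset E).card ≤ w) (hkey : (w - 1) * (p - q + 1) < p) :
    ∀ n (F : Finset (Set E)), F.card ≤ n →
      (∀ S ∈ F, ∃ m ∈ minset E, m ∈ S) → p ≤ F.card →
      (∀ G ⊆ F, G.card = p → ∃ m ∈ minset E, q ≤ (G.filter (fun S => m ∈ S)).card) →
      ∃ P : Finset E, P ⊆ minset E ∧ P.card ≤ p - q + 1 ∧ ∀ S ∈ F, ∃ x ∈ P, x ∈ S := by
  intro n
  induction n with
  | zero =>
    intro F hle _ hcard _
    exfalso
    omega
  | succ n ih =>
    intro F hle htr hcard hPq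
    set τ := p - q + 1 with hτ
    -- Case 2 : some minimal element is avoided by at most τ - 1 members
    by_cases h2 : ∃ m ∈ minset E, (F.filter (fun S => m ∉ S)).card < τ
    · obtain ⟨m, hmmin, hcnt⟩ := h2
      have hg : ∀ S : Set E, ∃ x : E, S ∈ F → (x ∈ minset E ∧ x ∈ S) := by
        intro S
        by_cases hS : S ∈ F
        · obtain ⟨x, hx1, hx2⟩ := htr S hS
          exact ⟨x, fun _ => ⟨hx1, hx2⟩⟩
        · exact ⟨m, fun h => absurd h hS⟩
      choose g hgspec using hg
      refine ⟨insert m ((F.filter (fun S => m ∉ S)).image g), ?_, ?_, ?_⟩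
      · intro x hx
        rcases Finset.mem_insert.1 hx with rfl | hx
        · exact hmmin
        · obtain ⟨S, hS, rfl⟩ := Finset.mem_image.1 hx
          exact (hgspec S (Finset.mem_filter.1 hS).1).1
      · have h1 := Finset.card_insert_le m ((F.filter (fun S => m ∉ S)).image g)
        have h2 := Finset.card_image_le (s := F.filter (fun S => m ∉ S)) (f := g)
        omega
      · intro S hS
        by_cases hmS : m ∈ S
        · exact ⟨m, Finset.mem_insert_self _ _, hmS⟩
        · have hSf : S ∈ F.filter (fun S => m ∉ S) := Finset.mem_filter.2 ⟨hS, hmS⟩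
          exact ⟨g S, Finset.mem_insert_of_mem (Finset.mem_image_of_mem g hSf),
            (hgspec S hS).2⟩
    · push_neg at h2
      -- now every minimal element is avoided at least τ times
      obtain ⟨G, hGF, hGcard⟩ := Finset.exists_subset_card_eq hcard
      obtain ⟨m₁, hm₁, hm₁q⟩ := hPq G hGF hGcard
      have hd1 : q ≤ (F.filter (fun S => m₁ ∈ S)).card := by
        refine le_trans hm₁q (Finset.card_le_card ?_)
        exact Finset.filter_subset_filter _ hGF
      have hn1 : p + 1 ≤ F.card := by
        have hca := card_hits_avoids m₁ F
        have ha := h2 m₁ hm₁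
        omega
      -- Case 1 : two members with comparable traces
      by_cases hcmp : ∃ S ∈ F, ∃ S' ∈ F, S' ≠ S ∧ ∀ x ∈ minset E, x ∈ S' → x ∈ S
      · obtain ⟨S, hS, S', hS', hne', hsub⟩ := hcmp
        obtain ⟨P, hPmin, hPcard, hPcov⟩ := ih (F.erase S)
          (by rw [Finset.card_erase_of_mem hS]; omega)
          (fun T hT => htr T (Finset.mem_of_mem_erase hT))
          (by rw [Finset.card_erase_of_mem hS]; omega)
          (fun G' hG' hGc' => hPq G' (hG'.trans (Finset.erase_subset _ _)) hGc')
        refine ⟨P, hPmin, hPcard, fun T hT => ?_⟩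
        by_cases hTS : T = S
        · obtain ⟨x, hxP, hxS'⟩ := hPcov S' (Finset.mem_erase.2 ⟨hne', hS'⟩)
          exact ⟨x, hxP, hTS ▸ hsub x (hPmin hxP) hxS'⟩
        · exact hPcov T (Finset.mem_erase.2 ⟨hTS, hT⟩)
      · exfalso
        push_neg at hcmp
        -- construct a p-subfamily contradicting the (p,q) property
        have hA₀ : τ ≤ (F.filter (fun S => m₁ ∉ S)).card := h2 m₁ hm₁
        obtain ⟨P₀, hP₀A, hP₀card⟩ := Finset.exists_subset_card_eq hA₀
        have hP₀F : P₀ ⊆ F := hP₀A.trans (Finset.filter_subset _ _)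
        have hP₀avoid : ∀ S ∈ P₀, m₁ ∉ S := fun S hS => (Finset.mem_filter.1 (hP₀A hS)).2
        have hrle : ∀ m : E, (P₀.filter (fun S => m ∉ S)).card ≤ τ := by
          intro m
          calc (P₀.filter (fun S => m ∉ S)).card ≤ P₀.card := Finset.card_filter_le _ _
            _ = τ := hP₀card
        have havail : ∀ m : E, ∃ Q : Finset (Set E),
            Q ⊆ (F.filter (fun S => m ∉ S)) \ P₀ ∧
            (m ∈ (minset E).erase m₁ → Q.card = τ - (P₀.filter (fun S => m ∉ S)).card) := by
          intro m
          by_cases hm : m ∈ (minset E).erase m₁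
          · have h1 : τ ≤ (F.filter (fun S => m ∉ S)).card :=
              h2 m (Finset.mem_of_mem_erase hm)
            have h2' := Finset.card_sdiff_add_card_inter (F.filter (fun S => m ∉ S)) P₀
            have h3 : (F.filter (fun S => m ∉ S)) ∩ P₀ ⊆ P₀.filter (fun S => m ∉ S) := by
              intro S hS
              rw [Finset.mem_inter] at hS
              exact Finset.mem_filter.2 ⟨hS.2, (Finset.mem_filter.1 hS.1).2⟩
            have h4 := Finset.card_le_card h3
            obtain ⟨Q, hQ1, hQ2⟩ := Finset.exists_subset_card_eq
              (show τ - (P₀.filter (fun S => m ∉ S)).card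
                  ≤ ((F.filter (fun S => m ∉ S)) \ P₀).card by omega)
            exact ⟨Q, hQ1, fun _ => hQ2⟩
          · exact ⟨∅, Finset.empty_subset _, fun h => absurd h hm⟩
        choose Q hQsub hQcard using havail
        set U := P₀ ∪ ((minset E).erase m₁).biUnion Q with hU
        have hUF : U ⊆ F := by
          intro S hS
          rcases Finset.mem_union.1 hS with hS | hS
          · exact hP₀F hS
          · obtain ⟨m, hm, hSm⟩ := Finset.mem_biUnion.1 hS
            exact Finset.filter_subset _ _ (Finset.mem_sdiff.1 (hQsub m hSm)).1
        -- estimate the size of U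
        have hterm : ∀ m ∈ (minset E).erase m₁,
            (Q m).card + (P₀.filter (fun S => m ∉ S)).card = τ := by
          intro m hm
          have := hrle m
          rw [hQcard m hm]
          omega
        have hsum : (∑ m ∈ (minset E).erase m₁, (Q m).card)
            + (∑ m ∈ (minset E).erase m₁, (P₀.filter (fun S => m ∉ S)).card)
            = ((minset E).erase m₁).card * τ := by
          rw [← Finset.sum_add_distrib, Finset.sum_congr rfl hterm,
            Finset.sum_const, smul_eq_mul]
        have hkeysum : τ ≤ (∑ m ∈ (minset E).erase m₁, (P₀.filter (fun S => m ∉ S)).card) + 1 := by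
          by_cases hτ2 : 2 ≤ τ
          · have hdc : ∑ m ∈ (minset E).erase m₁, (P₀.filter (fun S => m ∉ S)).card
                = ∑ S ∈ P₀, (((minset E).erase m₁).filter (fun x => x ∉ S)).card :=
              sum_card_filter_comm ((minset E).erase m₁) P₀ (fun m S => m ∉ S)
            have hone : ∀ S ∈ P₀, 1 ≤ (((minset E).erase m₁).filter (fun x => x ∉ S)).card := by
              intro S hSP₀
              have hSF : S ∈ F := hP₀F hSP₀
              have h1lt : 1 < (F.filter (fun S => m₁ ∉ S)).card := by omega
              obtain ⟨S', hS'A, hS'ne⟩ := Finset.exists_mem_ne h1lt S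
              have hS'F : S' ∈ F := Finset.filter_subset _ _ hS'A
              obtain ⟨x, hxmin, hxS', hxS⟩ := hcmp S hSF S' hS'F hS'ne
              have hxm₁ : x ≠ m₁ := by
                intro hcon
                exact (Finset.mem_filter.1 hS'A).2 (hcon ▸ hxS')
              refine Finset.card_pos.2 ⟨x, Finset.mem_filter.2 ⟨Finset.mem_erase.2 ⟨hxm₁, hxmin⟩, hxS⟩⟩
            calc τ = ∑ _S ∈ P₀, 1 := by
                  rw [Finset.sum_const, smul_eq_mul, mul_one, hP₀card]
              _ ≤ ∑ S ∈ P₀, (((minset E).erase m₁).filter (fun x => x ∉ S)).card :=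
                  Finset.sum_le_sum hone
              _ = ∑ m ∈ (minset E).erase m₁, (P₀.filter (fun S => m ∉ S)).card := hdc.symm
              _ ≤ _ := Nat.le_succ _
          · have h1τ : τ ≤ 1 := by omega
            exact le_trans h1τ (by omega)
        have hUcard : U.card ≤ p := by
          have h1 : U.card ≤ τ + ∑ m ∈ (minset E).erase m₁, (Q m).card := by
            refine le_trans (Finset.card_union_le _ _) ?_
            rw [hP₀card]
            exact Nat.add_le_add_left (Finset.card_biUnion_le) _
          have h4 : ((minset E).erase m₁).card * τ ≤ (w - 1) * τ := by
            refine Nat.mul_le_mul_right _ ?_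
            rw [Finset.card_erase_of_mem hm₁]
            omega
          have hτ1 : 1 ≤ τ := by omega
          linarith [h1, hsum, h4, hkeysum, hkey]
        obtain ⟨K, hUK, hKF, hKcard⟩ := Finset.exists_subsuperset_card_eq hUF hUcard hcard
        obtain ⟨ms, hmsmin, hmsq⟩ := hPq K hKF hKcard
        have hτK : τ ≤ (K.filter (fun S => ms ∉ S)).card := by
          by_cases hmm : ms = m₁
          · subst hmm
            have hsub : P₀ ⊆ K.filter (fun S => ms ∉ S) := by
              intro S hS
              exact Finset.mem_filter.2 ⟨hUK (Finset.mem_union_left _ hS), hP₀avoid S hS⟩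
            calc τ = P₀.card := hP₀card.symm
              _ ≤ _ := Finset.card_le_card hsub
          · have hmse : ms ∈ (minset E).erase m₁ := Finset.mem_erase.2 ⟨hmm, hmsmin⟩
            have hdisj : Disjoint (P₀.filter (fun S => ms ∉ S)) (Q ms) := by
              rw [Finset.disjoint_left]
              intro S hS1 hS2
              exact (Finset.mem_sdiff.1 (hQsub ms hS2)).2 (Finset.mem_filter.1 hS1).1
            have hsub2 : (P₀.filter (fun S => ms ∉ S)) ∪ Q ms ⊆ K.filter (fun S => ms ∉ S) := by
              intro S hS
              rcases Finset.mem_union.1 hS with hS | hS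
              · have := Finset.mem_filter.1 hS
                exact Finset.mem_filter.2 ⟨hUK (Finset.mem_union_left _ this.1), this.2⟩
              · have hm' := Finset.mem_sdiff.1 (hQsub ms hS)
                refine Finset.mem_filter.2 ⟨hUK (Finset.mem_union_right _ ?_),
                  (Finset.mem_filter.1 hm'.1).2⟩
                exact Finset.mem_biUnion.2 ⟨ms, hmse, hS⟩
            have hcu := Finset.card_union_of_disjoint hdisj
            have := Finset.card_le_card hsub2
            have hq2 := hQcard ms hmse
            have := hrle ms
            omega
        have hca := card_hits_avoids ms K
        omega

end PqPoset

theorem stmt_18 {E : Type*} [Fintype E] [PartialOrder E] (w p q : ℕ)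
    (hw2 : 2 ≤ w)
    (hwid : (∀ A : Finset E, IsAntichain (· ≤ ·) (↑A : Set E) → A.card ≤ w) ∧
      ∃ A : Finset E, IsAntichain (· ≤ ·) (↑A : Set E) ∧ A.card = w)
    (hq : w ≤ q) (hpq : q ≤ p)
    (hadm : (w - 2) * p < (w - 1) * (q - 1))
    (F : Finset (Set E)) (hF : ∀ S ∈ F, S.Nonempty ∧ IsLowerSet S)
    (hcard : p ≤ F.card)
    (hP : ∀ G ⊆ F, G.card = p → ∃ H ⊆ G, H.card = q ∧ (⋂ S ∈ H, S).Nonempty) :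
    ∃ P : Finset E, P.card ≤ p - q + 1 ∧ ∀ S ∈ F, ∃ x ∈ P, x ∈ S := by
  classical
  have hkey : (w - 1) * (p - q + 1) < p := by
    have e1 : (w - 1) * (q - 1) = (w - 2) * (q - 1) + (q - 1) := by
      have h : w - 1 = (w - 2) + 1 := by omega
      rw [h, add_mul, one_mul]
    have e2 : (w - 2) * p = (w - 2) * (q - 1) + (w - 2) * (p - q + 1) := by
      rw [← mul_add]
      congr 1
      omega
    have e3 : (w - 1) * (p - q + 1) = (w - 2) * (p - q + 1) + (p - q + 1) := by
      have h : w - 1 = (w - 2) + 1 := by omega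
      rw [h, add_mul, one_mul]
    have e4 : (q - 1) + (p - q + 1) = p := by omega
    linarith [hadm, e1, e2, e3, e4]
  have hkmin : (minset E).card ≤ w := by
    apply hwid.1
    intro a ha b hb hab hle
    rcases ha with hamem
    simp only [Finset.coe_filter, Set.mem_setOf_eq] at *
    exact hab (mem_minset.1 hb a hle)
  have htr : ∀ S ∈ F, ∃ m ∈ minset E, m ∈ S := by
    intro S hS
    obtain ⟨⟨x, hx⟩, hlow⟩ := hF S hS
    obtain ⟨m, hmmin, hmx⟩ := exists_minset_le x
    exact ⟨m, hmmin, hlow hmx hx⟩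
  have hPq' : ∀ G ⊆ F, G.card = p → ∃ m ∈ minset E, q ≤ (G.filter (fun S => m ∈ S)).card := by
    intro G hGF hGcard
    obtain ⟨H, hHG, hHcard, x, hx⟩ := hP G hGF hGcard
    obtain ⟨m, hmmin, hmx⟩ := exists_minset_le x
    refine ⟨m, hmmin, ?_⟩
    have hsub : H ⊆ G.filter (fun S => m ∈ S) := by
      intro S hSH
      have hSG := hHG hSH
      have hxS : x ∈ S := by
        have := Set.mem_iInter₂.1 hx S
        exact this hSH
      exact Finset.mem_filter.2 ⟨hSG, (hF S (hGF hSG)).2 hmx hxS⟩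
    calc q = H.card := hHcard.symm
      _ ≤ _ := Finset.card_le_card hsub
  obtain ⟨P, _, hPcard, hPcov⟩ :=
    core w p q hw2 hq hpq hkmin hkey F.card F le_rfl htr hcard hPq'
  exact ⟨P, hPcard, hPcov⟩
end
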